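/- arXiv:1104.3664 — 6 statements merged into one kernel-verified Lean document; each statement's English description precedes it below -/
import Mathlib

section
/- Let g be a real power series with α(g) < ∞ and let k ≥ 1. Then for every finite subset G_n ⊆ G, |Tr(K_n(g)^k) − Tr(K_n(g^k))| ≤ δ_n · ((k−1)/2) · α(g)^k, where g^k denotes the k-th Cauchy power of the power series g. Consequently, if (G_n) is a sequence of finite subsets with δ_n/m_n → 0, then (1/m_n)(Tr(K_n(g)^k) − Tr(K_n(g^k))) → 0 as n → ∞. -/
open scoped BigOperators Classical
open MeasureTheory Filter ProbabilityTheory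

noncomputable section

variable {G : Type*}

/-- Entrywise powers of the kernel `W`. -/
def Wpow (W : G → G → ℝ) : ℕ → G → G → ℝ
  | 0 => fun i j => if i = j then (1 : ℝ) else 0
  | (h + 1) => fun i j => ∑' k, W i k * Wpow W h k j

/-- The infinite matrix `K(f)` associated to a power series `f`. -/
def Kmat (W : G → G → ℝ) (f : ℕ → ℝ) (i j : G) : ℝ :=
  ∑' h, f h * Wpow W h i j

/-- The finite matrix `K_n(f)`, the restriction of `K(f)` to a finite subset. -/
def Kn (W : G → G → ℝ) (f : ℕ → ℝ) (Gn : Finset G) : Matrix Gn Gn ℝ :=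
  Matrix.of fun i j => Kmat W f (i : G) (j : G)

/-- The regularity factor `α(f) = Σ_h |f_h| (h+1)`. -/
def regFactor (f : ℕ → ℝ) : ℝ := ∑' h, |f h| * (h + 1 : ℝ)

/-- `‖f‖_{1,pol} = Σ_h |f_h|`. -/
def polNorm (f : ℕ → ℝ) : ℝ := ∑' h, |f h|

/-- Cauchy product of power series. -/
def cauchy (f g : ℕ → ℝ) (h : ℕ) : ℝ :=
  ∑ k ∈ Finset.range (h + 1), f k * g (h - k)

/-- The unit power series (`1`). -/
def cauchyOne : ℕ → ℝ := fun h => if h = 0 then 1 else 0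

/-- `k`-th Cauchy power of a power series. -/
def cauchyPow (g : ℕ → ℝ) : ℕ → ℕ → ℝ
  | 0 => cauchyOne
  | (k + 1) => cauchy g (cauchyPow g k)

/-- `δ_n`: the cardinality of the boundary of `G_n`. -/
def boundary (W : G → G → ℝ) (Gn : Finset G) : ℕ :=
  ({i | i ∈ Gn ∧ ∃ j, j ∉ Gn ∧ W i j ≠ 0} : Set G).ncard

/-- The block norm `b_n(B) = (1/δ_n) Σ_{i,j} |B(i,j)|`. -/
def blockNorm (W : G → G → ℝ) (Gn : Finset G) (B : Matrix Gn Gn ℝ) : ℝ :=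
  (1 / (boundary W Gn : ℝ)) * ∑ i, ∑ j, |B i j|

/-- Evaluation of a power series at a point. -/
def fEval (f : ℕ → ℝ) (x : ℝ) : ℝ := ∑' h, f h * x ^ h

/-- The class `F_ρ`: positive on `[-1,1]`, with `log f` admitting a power series
expansion on `[-1,1]` whose regularity factor is at most `ρ`. -/
def memF (ρ : ℝ) (f : ℕ → ℝ) : Prop :=
  Summable (fun h => |f h|) ∧
  (∀ x ∈ Set.Icc (-1 : ℝ) 1, 0 < fEval f x) ∧
  ∃ g : ℕ → ℝ, Summable (fun h => |g h| * (h + 1 : ℝ)) ∧ regFactor g ≤ ρ ∧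
    ∀ x ∈ Set.Icc (-1 : ℝ) 1, Real.log (fEval f x) = fEval g x

/-- The standing hypotheses on the kernel `W`: symmetry, degree bounded by `D`,
and entries bounded by `1/D`. -/
def KernelHyp (W : G → G → ℝ) (D : ℕ) : Prop :=
  (∀ i j, W i j = W j i) ∧
  (∀ i, ({j | W i j ≠ 0} : Set G).Finite) ∧
  (∀ i, ({j | W i j ≠ 0} : Set G).ncard ≤ D) ∧
  (∀ i j, |W i j| ≤ 1 / (D : ℝ))


namespace S4

open ENNReal
open scoped NNReal

/-! ### Generic helpers -/

lemma coe_nnnorm_tsum_le {ι : Type*} (f : ι → ℝ) :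
    (‖∑' i, f i‖₊ : ℝ≥0∞) ≤ ∑' i, (‖f i‖₊ : ℝ≥0∞) := by
  by_cases h : ∑' i, (‖f i‖₊ : ℝ≥0∞) = ⊤
  · exact h ▸ le_top
  · have hs : Summable fun i => ‖f i‖₊ := ENNReal.tsum_coe_ne_top_iff_summable.mp h
    rw [← ENNReal.coe_tsum hs]
    exact ENNReal.coe_le_coe.mpr (nnnorm_tsum_le hs)

lemma summable_of_dom {ι : Type*} {f : ι → ℝ} {F : ι → ℝ≥0∞}
    (hd : ∀ i, (‖f i‖₊ : ℝ≥0∞) ≤ F i) (hF : ∑' i, F i ≠ ⊤) : Summable f := by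
  have h1 : ∑' i, (‖f i‖₊ : ℝ≥0∞) ≠ ⊤ := ne_top_of_le_ne_top hF (ENNReal.tsum_le_tsum hd)
  have h2 : Summable fun i => ‖f i‖₊ := ENNReal.tsum_coe_ne_top_iff_summable.mp h1
  refine Summable.of_norm ?_
  have h3 := NNReal.summable_coe.mpr h2
  simpa [coe_nnnorm] using h3

lemma tsum_subtype_le_ennreal {β : Type*} {s : Set β} (f : β → ℝ≥0∞) :
    ∑' x : s, f ↑x ≤ ∑' x, f x := by
  rw [tsum_subtype]
  exact ENNReal.tsum_le_tsum (fun x => Set.indicator_le_self s f x)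

/-! ### The nonnegative majorant kernel and its powers -/

def eV (W : G → G → ℝ) (i j : G) : ℝ≥0∞ := (‖W i j‖₊ : ℝ≥0∞)

def eVP (W : G → G → ℝ) : ℕ → G → G → ℝ≥0∞
  | 0 => fun i j => if i = j then 1 else 0
  | (h + 1) => fun i j => ∑' c, eV W i c * eVP W h c j

lemma eV_row {W : G → G → ℝ} {D : ℕ} (hD : 0 < D) (hker : KernelHyp W D) (i : G) :
    ∑' j, eV W i j ≤ 1 := by
  obtain ⟨hsym, hfin, hcard, hle⟩ := hker
  classical
  set s : Finset G := (hfin i).toFinset with hs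
  have hz : ∀ j ∉ s, eV W i j = 0 := by
    intro j hj
    have hw : W i j = 0 := by
      by_contra hne
      exact hj ((hfin i).mem_toFinset.mpr hne)
    simp [eV, hw]
  rw [tsum_eq_sum hz]
  have hcard' : s.card ≤ D := by
    have h1 := hcard i
    rw [← Set.ncard_coe_finset s, (hfin i).coe_toFinset]
    exact h1
  have hterm : ∀ j ∈ s, eV W i j ≤ ENNReal.ofReal (1 / (D : ℝ)) := by
    intro j _
    rw [eV, ← enorm_eq_nnnorm, Real.enorm_eq_ofReal_abs]
    exact ENNReal.ofReal_le_ofReal (hle i j)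
  calc ∑ j ∈ s, eV W i j ≤ s.card • ENNReal.ofReal (1 / (D : ℝ)) :=
        Finset.sum_le_card_nsmul s _ _ hterm
    _ = (s.card : ℝ≥0∞) * ENNReal.ofReal (1 / (D : ℝ)) := by rw [nsmul_eq_mul]
    _ ≤ (D : ℝ≥0∞) * ENNReal.ofReal (1 / (D : ℝ)) := by
        exact mul_le_mul_left (by exact_mod_cast hcard') _
    _ = 1 := by
        rw [← ENNReal.ofReal_natCast D, ← ENNReal.ofReal_mul (by positivity)]
        rw [mul_one_div, div_self (by positivity : (D:ℝ) ≠ 0), ENNReal.ofReal_one]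

lemma eVP_row {W : G → G → ℝ} (hrow : ∀ i, ∑' j, eV W i j ≤ 1) :
    ∀ h i, ∑' j, eVP W h i j ≤ 1 := by
  intro h
  induction h with
  | zero =>
    intro i
    have : ∑' j, eVP W 0 i j = 1 := by
      rw [tsum_eq_single i]
      · simp [eVP]
      · intro b hb; simp only [eVP]; rw [if_neg (Ne.symm hb)]
    exact this.le
  | succ h ih =>
    intro i
    show ∑' j, ∑' c, eV W i c * eVP W h c j ≤ 1
    rw [ENNReal.tsum_comm]
    calc ∑' c, ∑' j, eV W i c * eVP W h c j
        = ∑' c, eV W i c * ∑' j, eVP W h c j := by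
          simp [ENNReal.tsum_mul_left]
      _ ≤ ∑' c, eV W i c * 1 :=
          ENNReal.tsum_le_tsum (fun c => mul_le_mul_right (ih c) _)
      _ ≤ 1 := by simpa using hrow i

lemma eVP_le_one {W : G → G → ℝ} (hrow : ∀ i, ∑' j, eV W i j ≤ 1) (h : ℕ) (i j : G) :
    eVP W h i j ≤ 1 :=
  le_trans (ENNReal.le_tsum j) (eVP_row hrow h i)

lemma eVP_dom {W : G → G → ℝ} : ∀ (h : ℕ) (i j : G), (‖Wpow W h i j‖₊ : ℝ≥0∞) ≤ eVP W h i j := by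
  intro h
  induction h with
  | zero => intro i j; simp only [Wpow, eVP]; split <;> simp
  | succ h ih =>
    intro i j
    show (‖∑' c, W i c * Wpow W h c j‖₊ : ℝ≥0∞) ≤ ∑' c, eV W i c * eVP W h c j
    refine le_trans (coe_nnnorm_tsum_le _) (ENNReal.tsum_le_tsum fun c => ?_)
    rw [nnnorm_mul, ENNReal.coe_mul]
    exact mul_le_mul_right (ih c j) _


/-! ### Series quantities -/

def eP (g : ℕ → ℝ) : ℝ≥0∞ := ∑' h, (‖g h‖₊ : ℝ≥0∞)

def eA (g : ℕ → ℝ) : ℝ≥0∞ := ∑' h, (‖g h‖₊ : ℝ≥0∞) * (h : ℝ≥0∞)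

section Series

variable {g : ℕ → ℝ} (hg : Summable (fun h => |g h| * (h + 1 : ℝ)))

lemma summable_abs_g (hg : Summable (fun h => |g h| * (h + 1 : ℝ))) :
    Summable (fun h => |g h|) := by
  refine Summable.of_nonneg_of_le (fun h => abs_nonneg _) (fun h => ?_) hg
  nlinarith [abs_nonneg (g h), Nat.cast_nonneg (α := ℝ) h]

lemma summable_abs_g_mul (hg : Summable (fun h => |g h| * (h + 1 : ℝ))) :
    Summable (fun h => |g h| * (h : ℝ)) := by
  refine Summable.of_nonneg_of_le (fun h => by positivity) (fun h => ?_) hg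
  nlinarith [abs_nonneg (g h)]

lemma eP_eq (hg : Summable (fun h => |g h| * (h + 1 : ℝ))) :
    eP g = ENNReal.ofReal (polNorm g) := by
  rw [polNorm, ENNReal.ofReal_tsum_of_nonneg (fun h => abs_nonneg _) (summable_abs_g hg)]
  simp [eP, ← enorm_eq_nnnorm, Real.enorm_eq_ofReal_abs]

lemma eA_eq (hg : Summable (fun h => |g h| * (h + 1 : ℝ))) :
    eA g = ENNReal.ofReal (∑' h, |g h| * (h : ℝ)) := by
  rw [ENNReal.ofReal_tsum_of_nonneg (fun h => by positivity) (summable_abs_g_mul hg)]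
  refine tsum_congr (fun h => ?_)
  rw [ENNReal.ofReal_mul (abs_nonneg _), ← enorm_eq_nnnorm, Real.enorm_eq_ofReal_abs, ENNReal.ofReal_natCast]

lemma eP_ne_top (hg : Summable (fun h => |g h| * (h + 1 : ℝ))) : eP g ≠ ⊤ := by
  rw [eP_eq hg]; exact ENNReal.ofReal_ne_top

lemma eA_ne_top (hg : Summable (fun h => |g h| * (h + 1 : ℝ))) : eA g ≠ ⊤ := by
  rw [eA_eq hg]; exact ENNReal.ofReal_ne_top

lemma regFactor_eq (hg : Summable (fun h => |g h| * (h + 1 : ℝ))) :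
    regFactor g = (∑' h, |g h| * (h : ℝ)) + polNorm g := by
  rw [regFactor, polNorm, ← Summable.tsum_add (summable_abs_g_mul hg) (summable_abs_g hg)]
  refine tsum_congr (fun h => ?_)
  ring

end Series

/-! ### The majorant of `K(g)` and its powers -/

def eAB (W : G → G → ℝ) (g : ℕ → ℝ) (i j : G) : ℝ≥0∞ :=
  ∑' h, (‖g h‖₊ : ℝ≥0∞) * eVP W h i j

def eMK (W : G → G → ℝ) (g : ℕ → ℝ) : ℕ → G → G → ℝ≥0∞
  | 0 => fun i j => if i = j then 1 else 0
  | (m + 1) => fun i j => ∑' c, eAB W g i c * eMK W g m c j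

def AK (W : G → G → ℝ) (g : ℕ → ℝ) : ℕ → G → G → ℝ
  | 0 => fun i j => if i = j then 1 else 0
  | (m + 1) => fun i j => ∑' c, Kmat W g i c * AK W g m c j

def BB (W : G → G → ℝ) (g : ℕ → ℝ) (Gn : Finset G) : ℕ → G → G → ℝ
  | 0 => fun i j => if i = j then 1 else 0
  | (m + 1) => fun i j => ∑ c ∈ Gn, Kmat W g i c * BB W g Gn m c j

section Kernels

variable {W : G → G → ℝ} {g : ℕ → ℝ}

lemma eAB_row (hrow : ∀ i, ∑' j, eV W i j ≤ 1) (i : G) :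
    ∑' j, eAB W g i j ≤ eP g := by
  rw [show (∑' j, eAB W g i j) = ∑' j, ∑' h, (‖g h‖₊ : ℝ≥0∞) * eVP W h i j from rfl,
    ENNReal.tsum_comm]
  calc ∑' h, ∑' j, (‖g h‖₊ : ℝ≥0∞) * eVP W h i j
      = ∑' h, (‖g h‖₊ : ℝ≥0∞) * ∑' j, eVP W h i j := by simp [ENNReal.tsum_mul_left]
    _ ≤ ∑' h, (‖g h‖₊ : ℝ≥0∞) * 1 :=
        ENNReal.tsum_le_tsum (fun h => mul_le_mul_right (eVP_row hrow h i) _)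
    _ = eP g := by simp [eP]

lemma eAB_le (hrow : ∀ i, ∑' j, eV W i j ≤ 1) (i j : G) : eAB W g i j ≤ eP g :=
  le_trans (ENNReal.le_tsum j) (eAB_row hrow i)

lemma eAB_dom (i j : G) : (‖Kmat W g i j‖₊ : ℝ≥0∞) ≤ eAB W g i j := by
  refine le_trans (coe_nnnorm_tsum_le _) (ENNReal.tsum_le_tsum fun h => ?_)
  rw [nnnorm_mul, ENNReal.coe_mul]
  exact mul_le_mul_right (eVP_dom h i j) _

lemma eMK_row (hrow : ∀ i, ∑' j, eV W i j ≤ 1) :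
    ∀ m i, ∑' j, eMK W g m i j ≤ (eP g) ^ m := by
  intro m
  induction m with
  | zero =>
    intro i
    have : ∑' j, eMK W g 0 i j = 1 := by
      rw [tsum_eq_single i]
      · simp [eMK]
      · intro b hb; simp only [eMK]; rw [if_neg (Ne.symm hb)]
    simp [this]
  | succ m ih =>
    intro i
    show ∑' j, ∑' c, eAB W g i c * eMK W g m c j ≤ (eP g) ^ (m + 1)
    rw [ENNReal.tsum_comm]
    calc ∑' c, ∑' j, eAB W g i c * eMK W g m c j
        = ∑' c, eAB W g i c * ∑' j, eMK W g m c j := by simp [ENNReal.tsum_mul_left]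
      _ ≤ ∑' c, eAB W g i c * (eP g) ^ m :=
          ENNReal.tsum_le_tsum (fun c => mul_le_mul_right (ih c) _)
      _ = (∑' c, eAB W g i c) * (eP g) ^ m := ENNReal.tsum_mul_right
      _ ≤ eP g * (eP g) ^ m := mul_le_mul_left (eAB_row hrow i) _
      _ = (eP g) ^ (m + 1) := (pow_succ' _ _).symm

lemma eMK_le (hrow : ∀ i, ∑' j, eV W i j ≤ 1) (m : ℕ) (i j : G) :
    eMK W g m i j ≤ (eP g) ^ m :=
  le_trans (ENNReal.le_tsum j) (eMK_row hrow m i)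

lemma AK_dom (hrow : ∀ i, ∑' j, eV W i j ≤ 1) :
    ∀ m i j, (‖AK W g m i j‖₊ : ℝ≥0∞) ≤ eMK W g m i j := by
  intro m
  induction m with
  | zero => intro i j; simp only [AK, eMK]; split <;> simp
  | succ m ih =>
    intro i j
    show (‖∑' c, Kmat W g i c * AK W g m c j‖₊ : ℝ≥0∞) ≤ ∑' c, eAB W g i c * eMK W g m c j
    refine le_trans (coe_nnnorm_tsum_le _) (ENNReal.tsum_le_tsum fun c => ?_)
    rw [nnnorm_mul, ENNReal.coe_mul]
    exact mul_le_mul' (eAB_dom i c) (ih c j)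

lemma BB_dom (hrow : ∀ i, ∑' j, eV W i j ≤ 1) (Gn : Finset G) :
    ∀ m i j, (‖BB W g Gn m i j‖₊ : ℝ≥0∞) ≤ eMK W g m i j := by
  intro m
  induction m with
  | zero => intro i j; simp only [BB, eMK]; split <;> simp
  | succ m ih =>
    intro i j
    show (‖∑ c ∈ Gn, Kmat W g i c * BB W g Gn m c j‖₊ : ℝ≥0∞)
        ≤ ∑' c, eAB W g i c * eMK W g m c j
    calc (‖∑ c ∈ Gn, Kmat W g i c * BB W g Gn m c j‖₊ : ℝ≥0∞)
        ≤ ∑ c ∈ Gn, (‖Kmat W g i c * BB W g Gn m c j‖₊ : ℝ≥0∞) := by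
          rw [← ENNReal.coe_finset_sum]
          exact_mod_cast nnnorm_sum_le _ _
      _ ≤ ∑ c ∈ Gn, eAB W g i c * eMK W g m c j := by
          refine Finset.sum_le_sum (fun c _ => ?_)
          rw [nnnorm_mul, ENNReal.coe_mul]
          exact mul_le_mul' (eAB_dom i c) (ih c j)
      _ ≤ ∑' c, eAB W g i c * eMK W g m c j := ENNReal.sum_le_tsum Gn

lemma summable_AK_mul (hrow : ∀ i, ∑' j, eV W i j ≤ 1)
    (hg : Summable (fun h => |g h| * (h + 1 : ℝ))) (m : ℕ) (i j : G) :
    Summable (fun c => Kmat W g i c * AK W g m c j) := by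
  refine summable_of_dom (F := fun c => eAB W g i c * eMK W g m c j) (fun c => ?_) ?_
  · rw [nnnorm_mul, ENNReal.coe_mul]
    exact mul_le_mul' (eAB_dom i c) (AK_dom hrow m c j)
  · refine ne_top_of_le_ne_top
      (ENNReal.mul_ne_top (eP_ne_top hg) (ENNReal.pow_ne_top (eP_ne_top hg) (n := m))) ?_
    calc ∑' c, eAB W g i c * eMK W g m c j
          ≤ ∑' c, eAB W g i c * (eP g) ^ m :=
            ENNReal.tsum_le_tsum (fun c => mul_le_mul_right (eMK_le hrow m c j) _)
        _ = (∑' c, eAB W g i c) * (eP g) ^ m := ENNReal.tsum_mul_right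
        _ ≤ eP g * (eP g) ^ m := mul_le_mul_left (eAB_row hrow i) _

end Kernels


/-! ### Real summation identities -/

section RealSide

variable {W : G → G → ℝ}

lemma wpow_norm_le_one (hrow : ∀ i, ∑' j, eV W i j ≤ 1) (h : ℕ) (i j : G) :
    ‖Wpow W h i j‖ ≤ 1 := by
  have h1 : (‖Wpow W h i j‖₊ : ℝ≥0∞) ≤ 1 := (eVP_dom h i j).trans (eVP_le_one hrow h i j)
  have h2 : ‖Wpow W h i j‖₊ ≤ 1 := by exact_mod_cast h1
  exact_mod_cast h2

lemma eVP_mul_row_le_one (hrow : ∀ i, ∑' j, eV W i j ≤ 1) (a b : ℕ) (i j : G) :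
    ∑' c, eVP W a i c * eVP W b c j ≤ 1 := by
  calc ∑' c, eVP W a i c * eVP W b c j
      ≤ ∑' c, eVP W a i c * 1 :=
        ENNReal.tsum_le_tsum (fun c => mul_le_mul_right (eVP_le_one hrow b c j) _)
    _ ≤ 1 := by simpa using eVP_row hrow a i

lemma Wpow_add (hrow : ∀ i, ∑' j, eV W i j ≤ 1) :
    ∀ a b i j, Wpow W (a + b) i j = ∑' c, Wpow W a i c * Wpow W b c j := by
  intro a
  induction a with
  | zero =>
    intro b i j
    rw [Nat.zero_add]
    symm
    rw [tsum_eq_single i]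
    · simp [Wpow]
    · intro c hc
      simp only [Wpow]
      rw [if_neg (Ne.symm hc), zero_mul]
  | succ a ih =>
    intro b i j
    have key : Summable (Function.uncurry (fun c m => W i c * (Wpow W a c m * Wpow W b m j))) := by
      refine summable_of_dom (F := fun p => eV W i p.1 * eVP W a p.1 p.2) (fun p => ?_) ?_
      · calc (‖W i p.1 * (Wpow W a p.1 p.2 * Wpow W b p.2 j)‖₊ : ℝ≥0∞)
            = eV W i p.1 * ((‖Wpow W a p.1 p.2‖₊ : ℝ≥0∞) * (‖Wpow W b p.2 j‖₊ : ℝ≥0∞)) := by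
              rw [nnnorm_mul, nnnorm_mul]; push_cast; rfl
          _ ≤ eV W i p.1 * (eVP W a p.1 p.2 * 1) :=
              mul_le_mul_right (mul_le_mul' (eVP_dom _ _ _)
                ((eVP_dom _ _ _).trans (eVP_le_one hrow _ _ _))) _
          _ = eV W i p.1 * eVP W a p.1 p.2 := by rw [mul_one]
      · refine ne_top_of_le_ne_top one_ne_top ?_
        rw [ENNReal.tsum_prod']
        calc ∑' c, ∑' m, eV W i c * eVP W a c m
            = ∑' c, eV W i c * ∑' m, eVP W a c m := by simp [ENNReal.tsum_mul_left]
          _ ≤ ∑' c, eV W i c * 1 :=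
              ENNReal.tsum_le_tsum fun c => mul_le_mul_right (eVP_row hrow a c) _
          _ ≤ 1 := by simpa using hrow i
    rw [show a + 1 + b = (a + b) + 1 from by omega]
    simp only [Wpow]
    calc ∑' c, W i c * Wpow W (a + b) c j
        = ∑' c, ∑' m, W i c * (Wpow W a c m * Wpow W b m j) := by
          refine tsum_congr fun c => ?_
          rw [ih b c j, tsum_mul_left]
      _ = ∑' m, ∑' c, W i c * (Wpow W a c m * Wpow W b m j) :=
          (Summable.tsum_comm' key (fun c => key.prod_factor c)
            (fun m => key.prod_symm.prod_factor m)).symm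
      _ = ∑' m, (∑' c, W i c * Wpow W a c m) * Wpow W b m j := by
          refine tsum_congr fun m => ?_
          rw [← tsum_mul_right]
          exact tsum_congr fun c => (mul_assoc _ _ _).symm

lemma kmat_mul (hrow : ∀ i, ∑' j, eV W i j ≤ 1) {f q : ℕ → ℝ}
    (hf : Summable fun a => ‖f a‖) (hq : Summable fun b => ‖q b‖) (i j : G) :
    Kmat W (cauchy f q) i j = ∑' c, Kmat W f i c * Kmat W q c j := by
  classical
  have hFc : ∀ c, Summable fun a => ‖f a * Wpow W a i c‖ := fun c => by
    refine Summable.of_nonneg_of_le (fun a => norm_nonneg _) (fun a => ?_) hf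
    rw [norm_mul]
    calc ‖f a‖ * ‖Wpow W a i c‖ ≤ ‖f a‖ * 1 :=
          mul_le_mul_of_nonneg_left (wpow_norm_le_one hrow a i c) (norm_nonneg _)
      _ = ‖f a‖ := mul_one _
  have hQc : ∀ c, Summable fun b => ‖q b * Wpow W b c j‖ := fun c => by
    refine Summable.of_nonneg_of_le (fun b => norm_nonneg _) (fun b => ?_) hq
    rw [norm_mul]
    calc ‖q b‖ * ‖Wpow W b c j‖ ≤ ‖q b‖ * 1 :=
          mul_le_mul_of_nonneg_left (wpow_norm_le_one hrow b c j) (norm_nonneg _)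
      _ = ‖q b‖ := mul_one _
  set S : G → ℕ → ℝ := fun c h =>
    ∑ a ∈ Finset.range (h + 1), (f a * Wpow W a i c) * (q (h - a) * Wpow W (h - a) c j)
    with hSdef
  have step1 : ∀ c, Kmat W f i c * Kmat W q c j = ∑' h, S c h := fun c =>
    tsum_mul_tsum_eq_tsum_sum_range_of_summable_norm (hFc c) (hQc c)
  -- summability of the Cauchy block over `G × ℕ`
  have hcauchyR : Summable fun h => ∑ a ∈ Finset.range (h + 1), ‖f a‖ * ‖q (h - a)‖ := by
    have h1 := summable_norm_sum_mul_range_of_summable_norm (f := fun a => ‖f a‖)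
      (g := fun b => ‖q b‖) (by simpa using hf) (by simpa using hq)
    refine h1.congr fun n => ?_
    exact Real.norm_of_nonneg (Finset.sum_nonneg fun a _ => by positivity)
  have hT : (∑' h, ∑ a ∈ Finset.range (h + 1),
      ((‖f a‖₊ * ‖q (h - a)‖₊ : ℝ≥0) : ℝ≥0∞)) ≠ ⊤ := by
    have : ∀ h, ∑ a ∈ Finset.range (h + 1), ((‖f a‖₊ * ‖q (h - a)‖₊ : ℝ≥0) : ℝ≥0∞)
        = ((∑ a ∈ Finset.range (h + 1), ‖f a‖₊ * ‖q (h - a)‖₊ : ℝ≥0) : ℝ≥0∞) := fun h =>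
      (ENNReal.coe_finset_sum _ _).symm
    rw [tsum_congr this]
    rw [ENNReal.tsum_coe_ne_top_iff_summable]
    rw [← NNReal.summable_coe]
    refine hcauchyR.congr fun n => ?_
    push_cast
    rfl
  have hS : Summable (Function.uncurry S) := by
    refine summable_of_dom (F := fun p => ∑ a ∈ Finset.range (p.2 + 1),
      ((‖f a‖₊ * ‖q (p.2 - a)‖₊ : ℝ≥0) : ℝ≥0∞) * (eVP W a i p.1 * eVP W (p.2 - a) p.1 j))
      (fun p => ?_) ?_
    · calc (‖S p.1 p.2‖₊ : ℝ≥0∞)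
          ≤ ∑ a ∈ Finset.range (p.2 + 1),
            (‖(f a * Wpow W a i p.1) * (q (p.2 - a) * Wpow W (p.2 - a) p.1 j)‖₊ : ℝ≥0∞) := by
            rw [← ENNReal.coe_finset_sum]
            exact_mod_cast nnnorm_sum_le _ _
        _ ≤ _ := by
            refine Finset.sum_le_sum (fun a _ => ?_)
            rw [mul_mul_mul_comm, nnnorm_mul, nnnorm_mul, nnnorm_mul]
            push_cast
            exact mul_le_mul' le_rfl (mul_le_mul' (eVP_dom _ _ _) (eVP_dom _ _ _))
    · refine ne_top_of_le_ne_top hT ?_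
      rw [ENNReal.tsum_prod', ENNReal.tsum_comm]
      refine ENNReal.tsum_le_tsum fun h => ?_
      show (∑' c : G, ∑ a ∈ Finset.range (h + 1),
          ((‖f a‖₊ * ‖q (h - a)‖₊ : ℝ≥0) : ℝ≥0∞) * (eVP W a i c * eVP W (h - a) c j))
        ≤ ∑ a ∈ Finset.range (h + 1), ((‖f a‖₊ * ‖q (h - a)‖₊ : ℝ≥0) : ℝ≥0∞)
      rw [Summable.tsum_finsetSum (fun a _ => ENNReal.summable)]
      refine Finset.sum_le_sum fun a _ => ?_
      rw [ENNReal.tsum_mul_left]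
      calc ((‖f a‖₊ * ‖q (h - a)‖₊ : ℝ≥0) : ℝ≥0∞) * ∑' c, eVP W a i c * eVP W (h - a) c j
          ≤ ((‖f a‖₊ * ‖q (h - a)‖₊ : ℝ≥0) : ℝ≥0∞) * 1 :=
            mul_le_mul_right (eVP_mul_row_le_one hrow a (h - a) i j) _
        _ = _ := mul_one _
  have hsummand : ∀ (a b : ℕ), Summable fun c =>
      (f a * Wpow W a i c) * (q b * Wpow W b c j) := by
    intro a b
    refine summable_of_dom (F := fun c =>
      ((‖f a‖₊ * ‖q b‖₊ : ℝ≥0) : ℝ≥0∞) * (eVP W a i c * eVP W b c j)) (fun c => ?_) ?_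
    · rw [mul_mul_mul_comm, nnnorm_mul, nnnorm_mul, nnnorm_mul]
      push_cast
      exact mul_le_mul' le_rfl (mul_le_mul' (eVP_dom _ _ _) (eVP_dom _ _ _))
    · rw [ENNReal.tsum_mul_left]
      exact ENNReal.mul_ne_top ENNReal.coe_ne_top
        (ne_top_of_le_ne_top one_ne_top (eVP_mul_row_le_one hrow a b i j))
  calc Kmat W (cauchy f q) i j
      = ∑' h, ∑' c, S c h := by
        refine tsum_congr fun h => ?_
        rw [hSdef]
        rw [Summable.tsum_finsetSum (fun a _ => hsummand a (h - a))]
        show cauchy f q h * Wpow W h i j = _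
        rw [cauchy, Finset.sum_mul]
        refine Finset.sum_congr rfl fun a ha => ?_
        have hah : a + (h - a) = h :=
          Nat.add_sub_cancel' (Nat.lt_succ_iff.mp (Finset.mem_range.mp ha))
        have hW : Wpow W h i j = ∑' c, Wpow W a i c * Wpow W (h - a) c j := by
          have := Wpow_add hrow a (h - a) i j
          rwa [hah] at this
        calc f a * q (h - a) * Wpow W h i j
            = f a * q (h - a) * ∑' c, Wpow W a i c * Wpow W (h - a) c j := by
              rw [hW]
          _ = ∑' c, (f a * Wpow W a i c) * (q (h - a) * Wpow W (h - a) c j) := by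
              rw [← tsum_mul_left]
              exact tsum_congr fun c => by ring
    _ = ∑' c, ∑' h, S c h :=
        Summable.tsum_comm' hS (fun c => hS.prod_factor c) (fun h => hS.prod_symm.prod_factor h)
    _ = ∑' c, Kmat W f i c * Kmat W q c j := tsum_congr fun c => (step1 c).symm

end RealSide


section CauchyPow

variable {W : G → G → ℝ} {g : ℕ → ℝ}

lemma summable_norm_cauchyPow (hg1 : Summable fun h => ‖g h‖) :
    ∀ m, Summable fun h => ‖cauchyPow g m h‖ := by
  intro m
  induction m with
  | zero =>
    refine summable_of_ne_finset_zero (s := {0}) (fun b hb => ?_)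
    have : b ≠ 0 := by simpa using hb
    simp [cauchyPow, cauchyOne, this]
  | succ m ih =>
    have h1 := summable_norm_sum_mul_range_of_summable_norm hg1 ih
    refine h1.congr fun n => ?_
    rfl

lemma kmat_cauchyPow (hrow : ∀ i, ∑' j, eV W i j ≤ 1) (hg1 : Summable fun h => ‖g h‖) :
    ∀ m i j, Kmat W (cauchyPow g m) i j = AK W g m i j := by
  intro m
  induction m with
  | zero =>
    intro i j
    show (∑' h, cauchyOne h * Wpow W h i j) = _
    rw [tsum_eq_single 0]
    · simp [cauchyOne, Wpow, AK]
    · intro b hb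
      simp [cauchyOne, hb]
  | succ m ih =>
    intro i j
    show Kmat W (cauchy g (cauchyPow g m)) i j = ∑' c, Kmat W g i c * AK W g m c j
    rw [kmat_mul hrow hg1 (summable_norm_cauchyPow hg1 m) i j]
    exact tsum_congr fun c => by rw [ih]

lemma Kn_pow (Gn : Finset G) :
    ∀ (m : ℕ) (i j : Gn), (Kn W g Gn ^ m) i j = BB W g Gn m (i : G) (j : G) := by
  intro m
  induction m with
  | zero =>
    intro i j
    rw [pow_zero]
    show (if i = j then (1:ℝ) else 0) = if (i : G) = (j : G) then (1:ℝ) else 0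
    by_cases h : i = j
    · rw [if_pos h, if_pos (by exact_mod_cast congrArg Subtype.val h)]
    · rw [if_neg h, if_neg (fun hc => h (Subtype.ext hc))]
  | succ m ih =>
    intro i j
    rw [pow_succ']
    show ∑ c : Gn, Kn W g Gn i c * (Kn W g Gn ^ m) c j = _
    rw [show (BB W g Gn (m+1) (i : G) (j : G))
        = ∑ c ∈ Gn, Kmat W g (i : G) c * BB W g Gn m c (j : G) from rfl]
    rw [← Finset.sum_coe_sort Gn (fun c => Kmat W g (i : G) c * BB W g Gn m c (j : G))]
    refine Finset.sum_congr rfl fun c _ => ?_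
    rw [ih c j]
    rfl

lemma trace_Kn_pow (Gn : Finset G) (m : ℕ) :
    Matrix.trace (Kn W g Gn ^ m) = ∑ i ∈ Gn, BB W g Gn m i i := by
  rw [Matrix.trace, ← Finset.sum_coe_sort Gn (fun i => BB W g Gn m i i)]
  refine Finset.sum_congr rfl fun i _ => ?_
  rw [Matrix.diag_apply, Kn_pow Gn m i i]

lemma trace_Kn_cauchyPow (hrow : ∀ i, ∑' j, eV W i j ≤ 1) (hg1 : Summable fun h => ‖g h‖)
    (Gn : Finset G) (m : ℕ) :
    Matrix.trace (Kn W (cauchyPow g m) Gn) = ∑ i ∈ Gn, AK W g m i i := by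
  rw [Matrix.trace, ← Finset.sum_coe_sort Gn (fun i => AK W g m i i)]
  refine Finset.sum_congr rfl fun i _ => ?_
  rw [Matrix.diag_apply]
  show Kmat W (cauchyPow g m) (i : G) (i : G) = _
  rw [kmat_cauchyPow hrow hg1 m]

end CauchyPow

/-! ### The boundary finset and the crossing lemma -/

def bF (W : G → G → ℝ) (Gn : Finset G) : Finset G :=
  Gn.filter (fun i => ∃ j, j ∉ Gn ∧ W i j ≠ 0)

lemma boundary_eq_card (W : G → G → ℝ) (Gn : Finset G) :
    boundary W Gn = (bF W Gn).card := by
  rw [boundary, ← Set.ncard_coe_finset]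
  congr 1
  ext i
  simp [bF]

section Crossing

variable {W : G → G → ℝ} {g : ℕ → ℝ} {Gn : Finset G}

lemma crossing (hrow : ∀ i, ∑' j, eV W i j ≤ 1) :
    ∀ (h : ℕ) (a b : G), a ∈ Gn → b ∉ Gn →
      eVP W h a b ≤ ∑ v ∈ bF W Gn, ∑ s ∈ Finset.range h, eVP W s a v * eVP W (h - s) v b := by
  intro h
  induction h with
  | zero =>
    intro a b ha hb
    have hab : a ≠ b := fun hc => hb (hc ▸ ha)
    simp [eVP, hab]
  | succ h ih =>
    intro a b ha hb
    -- split the sum over `c ∈ Gn` and `c ∉ Gn`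
    have hsplit : eVP W (h+1) a b
        = (∑' c : (Gn : Set G), eV W a c * eVP W h c b)
          + ∑' c : ((Gn : Set G)ᶜ : Set G), eV W a c * eVP W h c b := by
      rw [show eVP W (h+1) a b = ∑' c, eV W a c * eVP W h c b from rfl]
      exact (Summable.tsum_add_tsum_compl ENNReal.summable ENNReal.summable).symm
    -- rewrite the target with `Finset.sum_range_succ'`
    have htarget : ∀ v, ∑ s ∈ Finset.range (h+1), eVP W s a v * eVP W (h+1-s) v b
        = (∑ s ∈ Finset.range h, eVP W (s+1) a v * eVP W (h-s) v b)
          + eVP W 0 a v * eVP W (h+1) v b := by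
      intro v
      rw [Finset.sum_range_succ' (fun s => eVP W s a v * eVP W (h+1-s) v b) h]
      congr 1
      refine Finset.sum_congr rfl fun s _ => ?_
      congr 2
      omega
    rw [hsplit]
    have hGoal : (∑ v ∈ bF W Gn, ∑ s ∈ Finset.range (h+1), eVP W s a v * eVP W (h+1-s) v b)
        = (∑ v ∈ bF W Gn, ∑ s ∈ Finset.range h, eVP W (s+1) a v * eVP W (h-s) v b)
          + ∑ v ∈ bF W Gn, eVP W 0 a v * eVP W (h+1) v b := by
      rw [← Finset.sum_add_distrib]
      exact Finset.sum_congr rfl fun v _ => htarget v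
    rw [hGoal]
    refine add_le_add ?_ ?_
    · -- the part with `c ∈ Gn`
      calc ∑' c : (Gn : Set G), eV W a c * eVP W h c b
          ≤ ∑' c : (Gn : Set G), eV W a c *
              ∑ v ∈ bF W Gn, ∑ s ∈ Finset.range h, eVP W s (c : G) v * eVP W (h-s) v b := by
            refine ENNReal.tsum_le_tsum fun c => mul_le_mul_right (ih c b ?_ hb) _
            exact c.2
        _ = ∑' c : (Gn : Set G), ∑ v ∈ bF W Gn, eV W a c *
              ∑ s ∈ Finset.range h, eVP W s (c : G) v * eVP W (h-s) v b :=
            tsum_congr fun c => Finset.mul_sum _ _ _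
        _ = ∑ v ∈ bF W Gn, ∑' c : (Gn : Set G), eV W a c *
              ∑ s ∈ Finset.range h, eVP W s (c : G) v * eVP W (h-s) v b :=
            Summable.tsum_finsetSum (fun v _ => ENNReal.summable)
        _ = ∑ v ∈ bF W Gn, ∑' c : (Gn : Set G), ∑ s ∈ Finset.range h,
              eV W a c * (eVP W s (c : G) v * eVP W (h-s) v b) :=
            Finset.sum_congr rfl fun v _ => tsum_congr fun c => Finset.mul_sum _ _ _
        _ = ∑ v ∈ bF W Gn, ∑ s ∈ Finset.range h,
              (∑' c : (Gn : Set G), eV W a c * (eVP W s (c : G) v * eVP W (h-s) v b)) :=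
            Finset.sum_congr rfl fun v _ => Summable.tsum_finsetSum (fun s _ => ENNReal.summable)
        _ ≤ ∑ v ∈ bF W Gn, ∑ s ∈ Finset.range h, eVP W (s+1) a v * eVP W (h-s) v b := by
            refine Finset.sum_le_sum fun v _ => Finset.sum_le_sum fun s _ => ?_
            calc (∑' c : (Gn : Set G), eV W a c * (eVP W s (c : G) v * eVP W (h-s) v b))
                = (∑' c : (Gn : Set G), eV W a c * eVP W s (c : G) v) * eVP W (h-s) v b := by
                  rw [← ENNReal.tsum_mul_right]
                  exact tsum_congr fun c => (mul_assoc _ _ _).symm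
              _ ≤ eVP W (s+1) a v * eVP W (h-s) v b := by
                  refine mul_le_mul_left ?_ _
                  exact tsum_subtype_le_ennreal (fun c => eV W a c * eVP W s c v)
    · -- the part with `c ∉ Gn`
      by_cases hz : (∑' c : ((Gn : Set G)ᶜ : Set G), eV W a c * eVP W h c b) = 0
      · rw [hz]; exact zero_le
      · have hex : ∃ c : ((Gn : Set G)ᶜ : Set G), eV W a c * eVP W h c b ≠ 0 := by
          by_contra hc
          push_neg at hc
          exact hz (by simp [hc])
        obtain ⟨c, hc⟩ := hex
        have hWc : W a (c : G) ≠ 0 := by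
          intro hw
          apply hc
          simp [eV, hw]
        have hcn : (c : G) ∉ Gn := fun hmem => c.2 (Finset.mem_coe.mpr hmem)
        have habF : a ∈ bF W Gn := by
          rw [bF, Finset.mem_filter]
          exact ⟨ha, ⟨c, hcn, hWc⟩⟩
        calc (∑' c : ((Gn : Set G)ᶜ : Set G), eV W a c * eVP W h c b)
            ≤ ∑' c, eV W a c * eVP W h c b :=
              tsum_subtype_le_ennreal (fun c => eV W a c * eVP W h c b)
          _ = eVP W 0 a a * eVP W (h+1) a b := by
              rw [show eVP W 0 a a = 1 by simp [eVP]]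
              rw [one_mul]
              rfl
          _ ≤ ∑ v ∈ bF W Gn, eVP W 0 a v * eVP W (h+1) v b :=
              Finset.single_le_sum (f := fun v => eVP W 0 a v * eVP W (h+1) v b)
                (fun v _ => zero_le) habF

end Crossing


/-! ### The cycle bound -/

def eCC (W : G → G → ℝ) (g : ℕ → ℝ) (v a b : G) : ℝ≥0∞ :=
  ∑' h, (‖g h‖₊ : ℝ≥0∞) * ∑ s ∈ Finset.range h, eVP W s a v * eVP W (h - s) v b

def eL (W : G → G → ℝ) (g : ℕ → ℝ) (Gn : Finset G) : ℕ → ℕ → G → G → ℝ≥0∞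
  | 0 => fun s' i v => eVP W s' i v
  | (t + 1) => fun s' i v => ∑ c ∈ Gn, eAB W g i c * eL W g Gn t s' c v

def eR (W : G → G → ℝ) (g : ℕ → ℝ) (Gn : Finset G) (m s : ℕ) (v j : G) : ℝ≥0∞ :=
  ∑' o : ((Gn : Set G)ᶜ : Set G), eVP W m v o * eMK W g s o j

def eF (W : G → G → ℝ) (g : ℕ → ℝ) (Gn : Finset G) : ℕ → ℕ → G → G → ℝ≥0∞
  | 0 => fun s i j => ∑' c : ((Gn : Set G)ᶜ : Set G), eAB W g i c * eMK W g s c j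
  | (t + 1) => fun s i j => ∑ c ∈ Gn, eAB W g i c * eF W g Gn t s c j

section Cycle

variable {W : G → G → ℝ} {g : ℕ → ℝ} {Gn : Finset G}

lemma eAB_crossing (hrow : ∀ i, ∑' j, eV W i j ≤ 1) {a b : G} (ha : a ∈ Gn) (hb : b ∉ Gn) :
    eAB W g a b ≤ ∑ v ∈ bF W Gn, eCC W g v a b := by
  calc eAB W g a b
      ≤ ∑' h, (‖g h‖₊ : ℝ≥0∞) *
          ∑ v ∈ bF W Gn, ∑ s ∈ Finset.range h, eVP W s a v * eVP W (h - s) v b :=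
        ENNReal.tsum_le_tsum fun h => mul_le_mul_right (crossing hrow h a b ha hb) _
    _ = ∑' h, ∑ v ∈ bF W Gn, (‖g h‖₊ : ℝ≥0∞) *
          ∑ s ∈ Finset.range h, eVP W s a v * eVP W (h - s) v b :=
        tsum_congr fun h => Finset.mul_sum _ _ _
    _ = ∑ v ∈ bF W Gn, eCC W g v a b := Summable.tsum_finsetSum (fun v _ => ENNReal.summable)

lemma eL_le (hrow : ∀ i, ∑' j, eV W i j ≤ 1) :
    ∀ t s' i v, eL W g Gn t s' i v ≤ (eP g) ^ t := by
  intro t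
  induction t with
  | zero => intro s' i v; simpa [eL] using eVP_le_one hrow s' i v
  | succ t ih =>
    intro s' i v
    show ∑ c ∈ Gn, eAB W g i c * eL W g Gn t s' c v ≤ (eP g) ^ (t+1)
    calc ∑ c ∈ Gn, eAB W g i c * eL W g Gn t s' c v
        ≤ ∑ c ∈ Gn, eAB W g i c * (eP g) ^ t :=
          Finset.sum_le_sum fun c _ => mul_le_mul_right (ih s' c v) _
      _ ≤ ∑' c, eAB W g i c * (eP g) ^ t := ENNReal.sum_le_tsum Gn
      _ = (∑' c, eAB W g i c) * (eP g) ^ t := ENNReal.tsum_mul_right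
      _ ≤ eP g * (eP g) ^ t := mul_le_mul_left (eAB_row hrow i) _
      _ = (eP g) ^ (t+1) := (pow_succ' _ _).symm

lemma eF_le (hrow : ∀ i, ∑' j, eV W i j ≤ 1) :
    ∀ t s i j, i ∈ Gn →
      eF W g Gn t s i j ≤ ∑ v ∈ bF W Gn, ∑' h, (‖g h‖₊ : ℝ≥0∞) *
        ∑ s' ∈ Finset.range h, eL W g Gn t s' i v * eR W g Gn (h - s') s v j := by
  intro t
  induction t with
  | zero =>
    intro s i j hi
    show (∑' c : ((Gn : Set G)ᶜ : Set G), eAB W g i c * eMK W g s c j) ≤ _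
    have hstep : ∀ c : ((Gn : Set G)ᶜ : Set G),
        eAB W g i (c : G) * eMK W g s (c : G) j
          ≤ ∑ v ∈ bF W Gn, eCC W g v i (c : G) * eMK W g s (c : G) j := by
      intro c
      have hcn : (c : G) ∉ Gn := fun hmem => c.2 (Finset.mem_coe.mpr hmem)
      rw [← Finset.sum_mul]
      exact mul_le_mul_left (eAB_crossing hrow hi hcn) _
    calc (∑' c : ((Gn : Set G)ᶜ : Set G), eAB W g i c * eMK W g s c j)
        ≤ ∑' c : ((Gn : Set G)ᶜ : Set G),
            ∑ v ∈ bF W Gn, eCC W g v i (c : G) * eMK W g s (c : G) j :=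
          ENNReal.tsum_le_tsum hstep
      _ = ∑ v ∈ bF W Gn, ∑' c : ((Gn : Set G)ᶜ : Set G),
            eCC W g v i (c : G) * eMK W g s (c : G) j :=
          Summable.tsum_finsetSum (fun v _ => ENNReal.summable)
      _ = ∑ v ∈ bF W Gn, ∑' h, (‖g h‖₊ : ℝ≥0∞) *
            ∑ s' ∈ Finset.range h, eL W g Gn 0 s' i v * eR W g Gn (h - s') s v j := by
          refine Finset.sum_congr rfl fun v _ => ?_
          calc (∑' c : ((Gn : Set G)ᶜ : Set G), eCC W g v i (c : G) * eMK W g s (c : G) j)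
              = ∑' c : ((Gn : Set G)ᶜ : Set G), ∑' h,
                  ((‖g h‖₊ : ℝ≥0∞) * ∑ s' ∈ Finset.range h,
                    eVP W s' i v * eVP W (h - s') v (c : G)) * eMK W g s (c : G) j :=
                tsum_congr fun c => ENNReal.tsum_mul_right.symm
            _ = ∑' h, ∑' c : ((Gn : Set G)ᶜ : Set G),
                  ((‖g h‖₊ : ℝ≥0∞) * ∑ s' ∈ Finset.range h,
                    eVP W s' i v * eVP W (h - s') v (c : G)) * eMK W g s (c : G) j :=
                ENNReal.tsum_comm
            _ = ∑' h, (‖g h‖₊ : ℝ≥0∞) * ∑ s' ∈ Finset.range h,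
                  eL W g Gn 0 s' i v * eR W g Gn (h - s') s v j := by
                refine tsum_congr fun h => ?_
                calc (∑' c : ((Gn : Set G)ᶜ : Set G),
                      ((‖g h‖₊ : ℝ≥0∞) * ∑ s' ∈ Finset.range h,
                        eVP W s' i v * eVP W (h - s') v (c : G)) * eMK W g s (c : G) j)
                    = (‖g h‖₊ : ℝ≥0∞) * ∑' c : ((Gn : Set G)ᶜ : Set G),
                        (∑ s' ∈ Finset.range h,
                          eVP W s' i v * eVP W (h - s') v (c : G)) * eMK W g s (c : G) j := by
                      rw [← ENNReal.tsum_mul_left]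
                      exact tsum_congr fun c => (mul_assoc _ _ _)
                  _ = (‖g h‖₊ : ℝ≥0∞) * ∑ s' ∈ Finset.range h,
                        ∑' c : ((Gn : Set G)ᶜ : Set G),
                          (eVP W s' i v * eVP W (h - s') v (c : G)) * eMK W g s (c : G) j := by
                      congr 1
                      rw [← Summable.tsum_finsetSum (fun s' _ => ENNReal.summable)]
                      exact tsum_congr fun c => Finset.sum_mul _ _ _
                  _ = (‖g h‖₊ : ℝ≥0∞) * ∑ s' ∈ Finset.range h,
                        eL W g Gn 0 s' i v * eR W g Gn (h - s') s v j := by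
                      congr 1
                      refine Finset.sum_congr rfl fun s' _ => ?_
                      rw [show eL W g Gn 0 s' i v = eVP W s' i v from rfl, eR,
                        ← ENNReal.tsum_mul_left]
                      exact tsum_congr fun c => (mul_assoc _ _ _)
  | succ t ih =>
    intro s i j hi
    show ∑ c ∈ Gn, eAB W g i c * eF W g Gn t s c j ≤ _
    calc ∑ c ∈ Gn, eAB W g i c * eF W g Gn t s c j
        ≤ ∑ c ∈ Gn, eAB W g i c * (∑ v ∈ bF W Gn, ∑' h, (‖g h‖₊ : ℝ≥0∞) *
            ∑ s' ∈ Finset.range h, eL W g Gn t s' c v * eR W g Gn (h - s') s v j) :=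
          Finset.sum_le_sum fun c hc => mul_le_mul_right (ih s c j hc) _
      _ = ∑ v ∈ bF W Gn, ∑ c ∈ Gn, eAB W g i c * ∑' h, (‖g h‖₊ : ℝ≥0∞) *
            ∑ s' ∈ Finset.range h, eL W g Gn t s' c v * eR W g Gn (h - s') s v j := by
          rw [← Finset.sum_comm]
          exact Finset.sum_congr rfl fun c _ => Finset.mul_sum _ _ _
      _ = ∑ v ∈ bF W Gn, ∑' h, ∑ c ∈ Gn, eAB W g i c * ((‖g h‖₊ : ℝ≥0∞) *
            ∑ s' ∈ Finset.range h, eL W g Gn t s' c v * eR W g Gn (h - s') s v j) := by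
          refine Finset.sum_congr rfl fun v _ => ?_
          calc ∑ c ∈ Gn, eAB W g i c * ∑' h, (‖g h‖₊ : ℝ≥0∞) *
                ∑ s' ∈ Finset.range h, eL W g Gn t s' c v * eR W g Gn (h - s') s v j
              = ∑ c ∈ Gn, ∑' h, eAB W g i c * ((‖g h‖₊ : ℝ≥0∞) *
                  ∑ s' ∈ Finset.range h, eL W g Gn t s' c v * eR W g Gn (h - s') s v j) :=
                Finset.sum_congr rfl fun c _ => ENNReal.tsum_mul_left.symm
            _ = ∑' h, ∑ c ∈ Gn, eAB W g i c * ((‖g h‖₊ : ℝ≥0∞) *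
                  ∑ s' ∈ Finset.range h, eL W g Gn t s' c v * eR W g Gn (h - s') s v j) :=
                (Summable.tsum_finsetSum (fun c _ => ENNReal.summable)).symm
      _ = ∑ v ∈ bF W Gn, ∑' h, (‖g h‖₊ : ℝ≥0∞) *
            ∑ s' ∈ Finset.range h, eL W g Gn (t+1) s' i v * eR W g Gn (h - s') s v j := by
          refine Finset.sum_congr rfl fun v _ => tsum_congr fun h => ?_
          calc ∑ c ∈ Gn, eAB W g i c * ((‖g h‖₊ : ℝ≥0∞) *
                ∑ s' ∈ Finset.range h, eL W g Gn t s' c v * eR W g Gn (h - s') s v j)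
              = (‖g h‖₊ : ℝ≥0∞) * ∑ c ∈ Gn, eAB W g i c *
                ∑ s' ∈ Finset.range h, eL W g Gn t s' c v * eR W g Gn (h - s') s v j := by
                rw [Finset.mul_sum]
                exact Finset.sum_congr rfl fun c _ => by ring
            _ = (‖g h‖₊ : ℝ≥0∞) * ∑ s' ∈ Finset.range h,
                  eL W g Gn (t+1) s' i v * eR W g Gn (h - s') s v j := by
                congr 1
                calc ∑ c ∈ Gn, eAB W g i c *
                      ∑ s' ∈ Finset.range h, eL W g Gn t s' c v * eR W g Gn (h - s') s v j
                    = ∑ c ∈ Gn, ∑ s' ∈ Finset.range h,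
                        eAB W g i c * (eL W g Gn t s' c v * eR W g Gn (h - s') s v j) :=
                      Finset.sum_congr rfl fun c _ => Finset.mul_sum _ _ _
                  _ = ∑ s' ∈ Finset.range h, ∑ c ∈ Gn,
                        eAB W g i c * (eL W g Gn t s' c v * eR W g Gn (h - s') s v j) :=
                      Finset.sum_comm
                  _ = ∑ s' ∈ Finset.range h,
                        eL W g Gn (t+1) s' i v * eR W g Gn (h - s') s v j := by
                      refine Finset.sum_congr rfl fun s' _ => ?_
                      rw [show eL W g Gn (t+1) s' i v
                          = ∑ c ∈ Gn, eAB W g i c * eL W g Gn t s' c v from rfl,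
                        Finset.sum_mul]
                      exact Finset.sum_congr rfl fun c _ => (mul_assoc _ _ _).symm

lemma cycle_inner (hrow : ∀ i, ∑' j, eV W i j ≤ 1) (t s' m s : ℕ) (v : G) :
    ∑ i ∈ Gn, eL W g Gn t s' i v * eR W g Gn m s v i ≤ (eP g) ^ (t + s) := by
  calc ∑ i ∈ Gn, eL W g Gn t s' i v * eR W g Gn m s v i
      = ∑ i ∈ Gn, ∑' o : ((Gn : Set G)ᶜ : Set G),
          eL W g Gn t s' i v * (eVP W m v o * eMK W g s o i) := by
        refine Finset.sum_congr rfl fun i _ => ?_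
        rw [eR, ← ENNReal.tsum_mul_left]
    _ = ∑' o : ((Gn : Set G)ᶜ : Set G), ∑ i ∈ Gn,
          eL W g Gn t s' i v * (eVP W m v o * eMK W g s o i) :=
        (Summable.tsum_finsetSum (fun i _ => ENNReal.summable)).symm
    _ = ∑' o : ((Gn : Set G)ᶜ : Set G), eVP W m v o * ∑ i ∈ Gn,
          eMK W g s o i * eL W g Gn t s' i v := by
        refine tsum_congr fun o => ?_
        rw [Finset.mul_sum]
        exact Finset.sum_congr rfl fun i _ => by ring
    _ ≤ ∑' o : ((Gn : Set G)ᶜ : Set G), eVP W m v o * ((eP g) ^ s * (eP g) ^ t) := by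
        refine ENNReal.tsum_le_tsum fun o => mul_le_mul_right ?_ _
        calc ∑ i ∈ Gn, eMK W g s (o : G) i * eL W g Gn t s' i v
            ≤ ∑ i ∈ Gn, eMK W g s (o : G) i * (eP g) ^ t :=
              Finset.sum_le_sum fun i _ => mul_le_mul_right (eL_le hrow t s' i v) _
          _ ≤ ∑' i, eMK W g s (o : G) i * (eP g) ^ t := ENNReal.sum_le_tsum Gn
          _ = (∑' i, eMK W g s (o : G) i) * (eP g) ^ t := ENNReal.tsum_mul_right
          _ ≤ (eP g) ^ s * (eP g) ^ t :=
              mul_le_mul_left (eMK_row hrow s (o : G)) _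
    _ ≤ 1 * ((eP g) ^ s * (eP g) ^ t) := by
        rw [ENNReal.tsum_mul_right]
        refine mul_le_mul_left ?_ _
        exact le_trans (tsum_subtype_le_ennreal (fun o => eVP W m v o)) (eVP_row hrow m v)
    _ = (eP g) ^ (t + s) := by rw [one_mul, ← pow_add, Nat.add_comm s t]

lemma trace_eF_le (hrow : ∀ i, ∑' j, eV W i j ≤ 1) (t s : ℕ) :
    ∑ i ∈ Gn, eF W g Gn t s i i
      ≤ ((bF W Gn).card : ℝ≥0∞) * eA g * (eP g) ^ (t + s) := by
  calc ∑ i ∈ Gn, eF W g Gn t s i i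
      ≤ ∑ i ∈ Gn, ∑ v ∈ bF W Gn, ∑' h, (‖g h‖₊ : ℝ≥0∞) *
          ∑ s' ∈ Finset.range h, eL W g Gn t s' i v * eR W g Gn (h - s') s v i :=
        Finset.sum_le_sum fun i hi => eF_le hrow t s i i hi
    _ = ∑ v ∈ bF W Gn, ∑' h, ∑ i ∈ Gn, (‖g h‖₊ : ℝ≥0∞) *
          ∑ s' ∈ Finset.range h, eL W g Gn t s' i v * eR W g Gn (h - s') s v i := by
        rw [Finset.sum_comm]
        exact Finset.sum_congr rfl fun v _ => (Summable.tsum_finsetSum (fun i _ => ENNReal.summable)).symm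
    _ = ∑ v ∈ bF W Gn, ∑' h, (‖g h‖₊ : ℝ≥0∞) * ∑ s' ∈ Finset.range h,
          ∑ i ∈ Gn, eL W g Gn t s' i v * eR W g Gn (h - s') s v i := by
        refine Finset.sum_congr rfl fun v _ => tsum_congr fun h => ?_
        rw [Finset.mul_sum]
        calc ∑ i ∈ Gn, (‖g h‖₊ : ℝ≥0∞) *
              ∑ s' ∈ Finset.range h, eL W g Gn t s' i v * eR W g Gn (h - s') s v i
            = ∑ i ∈ Gn, ∑ s' ∈ Finset.range h, (‖g h‖₊ : ℝ≥0∞) *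
                (eL W g Gn t s' i v * eR W g Gn (h - s') s v i) :=
              Finset.sum_congr rfl fun i _ => Finset.mul_sum _ _ _
          _ = ∑ s' ∈ Finset.range h, ∑ i ∈ Gn, (‖g h‖₊ : ℝ≥0∞) *
                (eL W g Gn t s' i v * eR W g Gn (h - s') s v i) := Finset.sum_comm
          _ = ∑ s' ∈ Finset.range h, (‖g h‖₊ : ℝ≥0∞) *
                ∑ i ∈ Gn, eL W g Gn t s' i v * eR W g Gn (h - s') s v i :=
              Finset.sum_congr rfl fun s' _ => (Finset.mul_sum _ _ _).symm
    _ ≤ ∑ v ∈ bF W Gn, ∑' h, (‖g h‖₊ : ℝ≥0∞) * ∑ s' ∈ Finset.range h, (eP g) ^ (t + s) := by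
        refine Finset.sum_le_sum fun v _ => ENNReal.tsum_le_tsum fun h => mul_le_mul_right ?_ _
        exact Finset.sum_le_sum fun s' _ => cycle_inner hrow t s' (h - s') s v
    _ = ∑ v ∈ bF W Gn, (∑' h, (‖g h‖₊ : ℝ≥0∞) * (h : ℝ≥0∞)) * (eP g) ^ (t + s) := by
        refine Finset.sum_congr rfl fun v _ => ?_
        rw [← ENNReal.tsum_mul_right]
        refine tsum_congr fun h => ?_
        rw [Finset.sum_const, Finset.card_range, nsmul_eq_mul, mul_assoc]
    _ = ((bF W Gn).card : ℝ≥0∞) * eA g * (eP g) ^ (t + s) := by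
        rw [Finset.sum_const, nsmul_eq_mul, eA, mul_assoc]

end Cycle


/-! ### The difference bound -/

section Diff

variable {W : G → G → ℝ} {g : ℕ → ℝ} {Gn : Finset G}

lemma eDD_rec (hrow : ∀ i, ∑' j, eV W i j ≤ 1)
    (hg : Summable (fun h => |g h| * (h + 1 : ℝ))) (m : ℕ) (i j : G) :
    (‖AK W g (m+1) i j - BB W g Gn (m+1) i j‖₊ : ℝ≥0∞)
      ≤ (∑ c ∈ Gn, eAB W g i c * (‖AK W g m c j - BB W g Gn m c j‖₊ : ℝ≥0∞))
        + eF W g Gn 0 m i j := by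
  have hsum := summable_AK_mul hrow hg m i j
  have hsplit : AK W g (m+1) i j = (∑ c ∈ Gn, Kmat W g i c * AK W g m c j)
      + ∑' c : ((Gn : Set G)ᶜ : Set G), Kmat W g i (c : G) * AK W g m (c : G) j :=
    (Summable.sum_add_tsum_compl hsum).symm
  have hBB : BB W g Gn (m+1) i j = ∑ c ∈ Gn, Kmat W g i c * BB W g Gn m c j := rfl
  have harg : AK W g (m+1) i j - BB W g Gn (m+1) i j
      = (∑ c ∈ Gn, Kmat W g i c * (AK W g m c j - BB W g Gn m c j))
        + ∑' c : ((Gn : Set G)ᶜ : Set G), Kmat W g i (c : G) * AK W g m (c : G) j := by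
    rw [hsplit, hBB]
    rw [show (∑ c ∈ Gn, Kmat W g i c * (AK W g m c j - BB W g Gn m c j))
        = (∑ c ∈ Gn, (Kmat W g i c * AK W g m c j - Kmat W g i c * BB W g Gn m c j)) from
      Finset.sum_congr rfl fun c _ => mul_sub _ _ _]
    rw [Finset.sum_sub_distrib]
    ring
  rw [harg]
  calc (‖(∑ c ∈ Gn, Kmat W g i c * (AK W g m c j - BB W g Gn m c j))
        + ∑' c : ((Gn : Set G)ᶜ : Set G), Kmat W g i (c : G) * AK W g m (c : G) j‖₊ : ℝ≥0∞)
      ≤ (‖∑ c ∈ Gn, Kmat W g i c * (AK W g m c j - BB W g Gn m c j)‖₊ : ℝ≥0∞)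
        + (‖∑' c : ((Gn : Set G)ᶜ : Set G), Kmat W g i (c : G) * AK W g m (c : G) j‖₊ : ℝ≥0∞) := by
        rw [← ENNReal.coe_add]
        exact_mod_cast nnnorm_add_le _ _
    _ ≤ (∑ c ∈ Gn, eAB W g i c * (‖AK W g m c j - BB W g Gn m c j‖₊ : ℝ≥0∞))
        + eF W g Gn 0 m i j := by
        refine add_le_add ?_ ?_
        · calc (‖∑ c ∈ Gn, Kmat W g i c * (AK W g m c j - BB W g Gn m c j)‖₊ : ℝ≥0∞)
              ≤ ∑ c ∈ Gn, (‖Kmat W g i c * (AK W g m c j - BB W g Gn m c j)‖₊ : ℝ≥0∞) := by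
                rw [← ENNReal.coe_finset_sum]
                exact_mod_cast nnnorm_sum_le _ _
            _ ≤ ∑ c ∈ Gn, eAB W g i c * (‖AK W g m c j - BB W g Gn m c j‖₊ : ℝ≥0∞) := by
                refine Finset.sum_le_sum fun c _ => ?_
                rw [nnnorm_mul, ENNReal.coe_mul]
                exact mul_le_mul_left (eAB_dom i c) _
        · refine le_trans (coe_nnnorm_tsum_le _) ?_
          refine ENNReal.tsum_le_tsum fun c => ?_
          rw [nnnorm_mul, ENNReal.coe_mul]
          exact mul_le_mul' (eAB_dom i (c : G)) (AK_dom hrow m (c : G) j)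

lemma eDD_le (hrow : ∀ i, ∑' j, eV W i j ≤ 1)
    (hg : Summable (fun h => |g h| * (h + 1 : ℝ))) :
    ∀ (m : ℕ) (i j : G), (‖AK W g m i j - BB W g Gn m i j‖₊ : ℝ≥0∞)
      ≤ ∑ t ∈ Finset.range m, eF W g Gn t (m - 1 - t) i j := by
  intro m
  induction m with
  | zero =>
    intro i j
    show (‖(if i = j then (1:ℝ) else 0) - (if i = j then (1:ℝ) else 0)‖₊ : ℝ≥0∞) ≤ _
    simp
  | succ m ih =>
    intro i j
    simp only [Nat.add_sub_cancel]
    refine le_trans (eDD_rec hrow hg m i j) ?_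
    calc (∑ c ∈ Gn, eAB W g i c * (‖AK W g m c j - BB W g Gn m c j‖₊ : ℝ≥0∞))
          + eF W g Gn 0 m i j
        ≤ (∑ c ∈ Gn, eAB W g i c * ∑ t ∈ Finset.range m, eF W g Gn t (m - 1 - t) c j)
          + eF W g Gn 0 m i j :=
          add_le_add_left (Finset.sum_le_sum fun c _ => mul_le_mul_right (ih c j) _) _
      _ = (∑ t ∈ Finset.range m, ∑ c ∈ Gn, eAB W g i c * eF W g Gn t (m - 1 - t) c j)
          + eF W g Gn 0 m i j := by
          congr 1
          rw [← Finset.sum_comm]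
          exact Finset.sum_congr rfl fun c _ => Finset.mul_sum _ _ _
      _ = (∑ t ∈ Finset.range m, eF W g Gn (t+1) (m - 1 - t) i j) + eF W g Gn 0 m i j := rfl
      _ = ∑ t ∈ Finset.range (m+1), eF W g Gn t (m - t) i j := by
          rw [Finset.sum_range_succ' (fun t => eF W g Gn t (m - t) i j) m]
          congr 1
          exact Finset.sum_congr rfl fun t _ => by
            rw [show m - (t+1) = m - 1 - t from by omega]

lemma trace_diff_le (hrow : ∀ i, ∑' j, eV W i j ≤ 1)
    (hg : Summable (fun h => |g h| * (h + 1 : ℝ))) (k : ℕ) :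
    ∑ i ∈ Gn, (‖AK W g k i i - BB W g Gn k i i‖₊ : ℝ≥0∞)
      ≤ (k : ℝ≥0∞) * (((bF W Gn).card : ℝ≥0∞) * eA g * (eP g) ^ (k - 1)) := by
  calc ∑ i ∈ Gn, (‖AK W g k i i - BB W g Gn k i i‖₊ : ℝ≥0∞)
      ≤ ∑ i ∈ Gn, ∑ t ∈ Finset.range k, eF W g Gn t (k - 1 - t) i i :=
        Finset.sum_le_sum fun i _ => eDD_le hrow hg k i i
    _ = ∑ t ∈ Finset.range k, ∑ i ∈ Gn, eF W g Gn t (k - 1 - t) i i := Finset.sum_comm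
    _ ≤ ∑ t ∈ Finset.range k, ((bF W Gn).card : ℝ≥0∞) * eA g * (eP g) ^ (t + (k - 1 - t)) :=
        Finset.sum_le_sum fun t _ => trace_eF_le hrow t (k - 1 - t)
    _ = ∑ t ∈ Finset.range k, ((bF W Gn).card : ℝ≥0∞) * eA g * (eP g) ^ (k - 1) := by
        refine Finset.sum_congr rfl fun t ht => ?_
        rw [show t + (k - 1 - t) = k - 1 from by
          have := Finset.mem_range.mp ht; omega]
    _ = (k : ℝ≥0∞) * (((bF W Gn).card : ℝ≥0∞) * eA g * (eP g) ^ (k - 1)) := by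
        rw [Finset.sum_const, Finset.card_range, nsmul_eq_mul]

end Diff

/-! ### Final arithmetic -/

lemma cauchyPow_one (g : ℕ → ℝ) : cauchyPow g 1 = g := by
  funext h
  show cauchy g cauchyOne h = g h
  rw [cauchy, Finset.sum_eq_single h]
  · simp [cauchyOne]
  · intro a ha hne
    have hlt : a < h := lt_of_le_of_ne (Nat.lt_succ_iff.mp (Finset.mem_range.mp ha)) hne
    have : h - a ≠ 0 := Nat.sub_ne_zero_of_lt hlt
    simp [cauchyOne, this]
  · intro hh
    exact absurd (Finset.self_mem_range_succ h) hh

lemma arith {x y : ℝ} (hx : 0 ≤ x) (hy : 0 ≤ y) {k : ℕ} (hk : 2 ≤ k) :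
    (k : ℝ) * (x * y ^ (k - 1)) ≤ (((k : ℝ) - 1) / 2) * (x + y) ^ k := by
  rcases eq_or_lt_of_le hk with h2 | h3
  · subst h2
    norm_num
    nlinarith [sq_nonneg (x - y)]
  · have hbin : (k : ℝ) * (x * y ^ (k - 1)) ≤ (x + y) ^ k := by
      rw [add_pow]
      have h1 : (1 : ℕ) ∈ Finset.range (k + 1) := by
        rw [Finset.mem_range]; omega
      have hs := Finset.single_le_sum
        (f := fun m => x ^ m * y ^ (k - m) * (k.choose m : ℝ))
        (fun m _ => by positivity) h1
      calc (k : ℝ) * (x * y ^ (k - 1)) = x ^ 1 * y ^ (k - 1) * (k.choose 1 : ℝ) := by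
            rw [Nat.choose_one_right]; ring
        _ ≤ _ := hs
    have hc : (1 : ℝ) ≤ ((k : ℝ) - 1) / 2 := by
      have h3' : (3 : ℝ) ≤ (k : ℝ) := by exact_mod_cast h3
      linarith
    calc (k : ℝ) * (x * y ^ (k - 1)) ≤ (x + y) ^ k := hbin
      _ = 1 * (x + y) ^ k := (one_mul _).symm
      _ ≤ (((k : ℝ) - 1) / 2) * (x + y) ^ k :=
          mul_le_mul_of_nonneg_right hc (by positivity)


/-! ### The main bound for a fixed finite subset -/

lemma main_bound {W : G → G → ℝ} {D : ℕ} (hD : 0 < D) (hker : KernelHyp W D)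
    {g : ℕ → ℝ} (hg : Summable (fun h => |g h| * (h + 1 : ℝ))) {k : ℕ} (hk : 1 ≤ k)
    (Gn : Finset G) :
    |Matrix.trace (Kn W g Gn ^ k) - Matrix.trace (Kn W (cauchyPow g k) Gn)|
      ≤ (boundary W Gn : ℝ) * (((k : ℝ) - 1) / 2) * regFactor g ^ k := by
  have hrow := eV_row hD hker
  have hg1 : Summable fun h => ‖g h‖ := by
    simpa [Real.norm_eq_abs] using summable_abs_g hg
  rcases eq_or_lt_of_le hk with h1 | h2
  · -- `k = 1` : the two traces agree
    rw [← h1, pow_one, cauchyPow_one, sub_self, abs_zero]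
    norm_num
  · -- `k ≥ 2`
    have hk2 : 2 ≤ k := h2
    set P := polNorm g with hPdef
    set A2 := ∑' h, |g h| * (h : ℝ) with hA2def
    have hA2 : 0 ≤ A2 := tsum_nonneg (fun h => by positivity)
    have hP : 0 ≤ P := tsum_nonneg (fun h => abs_nonneg _)
    have htr : Matrix.trace (Kn W g Gn ^ k) - Matrix.trace (Kn W (cauchyPow g k) Gn)
        = ∑ i ∈ Gn, (BB W g Gn k i i - AK W g k i i) := by
      rw [trace_Kn_pow, trace_Kn_cauchyPow hrow hg1, ← Finset.sum_sub_distrib]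
    rw [htr]
    have habs : |∑ i ∈ Gn, (BB W g Gn k i i - AK W g k i i)|
        ≤ ∑ i ∈ Gn, ((‖AK W g k i i - BB W g Gn k i i‖₊ : ℝ≥0∞)).toReal := by
      refine le_trans (Finset.abs_sum_le_sum_abs _ _) ?_
      refine Finset.sum_le_sum fun i _ => ?_
      rw [abs_sub_comm]
      simp [Real.norm_eq_abs]
    refine le_trans habs ?_
    have hsum_toReal : ∑ i ∈ Gn, ((‖AK W g k i i - BB W g Gn k i i‖₊ : ℝ≥0∞)).toReal
        = (∑ i ∈ Gn, (‖AK W g k i i - BB W g Gn k i i‖₊ : ℝ≥0∞)).toReal :=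
      (ENNReal.toReal_sum (fun i _ => ENNReal.coe_ne_top)).symm
    rw [hsum_toReal]
    have hfin : ((k : ℝ≥0∞) * (((bF W Gn).card : ℝ≥0∞) * eA g * (eP g) ^ (k - 1))) ≠ ⊤ := by
      refine ENNReal.mul_ne_top (ENNReal.natCast_ne_top k) ?_
      exact ENNReal.mul_ne_top
        (ENNReal.mul_ne_top (ENNReal.natCast_ne_top _) (eA_ne_top hg))
        (ENNReal.pow_ne_top (eP_ne_top hg))
    have h3 := ENNReal.toReal_mono hfin (trace_diff_le hrow hg k)
    refine le_trans h3 ?_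
    have hcompute : ((k : ℝ≥0∞) * (((bF W Gn).card : ℝ≥0∞) * eA g * (eP g) ^ (k - 1))).toReal
        = (k : ℝ) * (((bF W Gn).card : ℝ) * A2 * P ^ (k - 1)) := by
      rw [eA_eq hg, eP_eq hg, ENNReal.toReal_mul, ENNReal.toReal_mul, ENNReal.toReal_mul,
        ENNReal.toReal_pow, ENNReal.toReal_natCast, ENNReal.toReal_natCast,
        ENNReal.toReal_ofReal hA2, ENNReal.toReal_ofReal hP]
    rw [hcompute]
    have hreg : regFactor g = A2 + P := regFactor_eq hg
    rw [boundary_eq_card, hreg]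
    set c := ((bF W Gn).card : ℝ) with hcdef
    have hc0 : 0 ≤ c := Nat.cast_nonneg _
    calc (k : ℝ) * (c * A2 * P ^ (k - 1)) = c * ((k : ℝ) * (A2 * P ^ (k - 1))) := by ring
      _ ≤ c * ((((k : ℝ) - 1) / 2) * (A2 + P) ^ k) :=
          mul_le_mul_of_nonneg_left (arith hA2 hP hk2) hc0
      _ = c * (((k : ℝ) - 1) / 2) * (A2 + P) ^ k := by ring

end S4

/-- trace comparison. For a power series `g` with `α(g) < ∞` and `k ≥ 1`,
`|Tr(K_n(g)^k) − Tr(K_n(g^k))| ≤ δ_n·((k−1)/2)·α(g)^k` for every finite subset, and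
consequently the normalized difference tends to `0` along any sequence with `δ_n/m_n → 0`. -/
theorem stmt4 {G : Type*} [Countable G] (W : G → G → ℝ) (D : ℕ) (hD : 0 < D)
    (hker : KernelHyp W D)
    (g : ℕ → ℝ) (hg : Summable (fun h => |g h| * (h + 1 : ℝ)))
    (k : ℕ) (hk : 1 ≤ k) :
    (∀ Gn : Finset G,
      |Matrix.trace (Kn W g Gn ^ k) - Matrix.trace (Kn W (cauchyPow g k) Gn)|
        ≤ (boundary W Gn : ℝ) * (((k : ℝ) - 1) / 2) * regFactor g ^ k) ∧
    (∀ GN : ℕ → Finset G,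
      Tendsto (fun n => (boundary W (GN n) : ℝ) / ((GN n).card : ℝ)) atTop (nhds 0) →
      Tendsto (fun n => (1 / ((GN n).card : ℝ)) *
          (Matrix.trace (Kn W g (GN n) ^ k) - Matrix.trace (Kn W (cauchyPow g k) (GN n))))
        atTop (nhds 0)) := by
  constructor
  · exact fun Gn => S4.main_bound hD hker hg hk Gn
  · intro GN hGN
    have hb := fun n => S4.main_bound hD hker hg hk (GN n)
    refine squeeze_zero_norm (a := fun n => ((boundary W (GN n) : ℝ) / ((GN n).card : ℝ))
      * ((((k : ℝ) - 1) / 2) * regFactor g ^ k)) (fun n => ?_) ?_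
    · rw [Real.norm_eq_abs, abs_mul]
      have hm : |1 / (((GN n).card : ℝ))| = 1 / (((GN n).card : ℝ)) :=
        abs_of_nonneg (by positivity)
      rw [hm]
      calc (1 / (((GN n).card : ℝ)))
            * |Matrix.trace (Kn W g (GN n) ^ k) - Matrix.trace (Kn W (cauchyPow g k) (GN n))|
          ≤ (1 / (((GN n).card : ℝ)))
            * ((boundary W (GN n) : ℝ) * (((k : ℝ) - 1) / 2) * regFactor g ^ k) :=
            mul_le_mul_of_nonneg_left (hb n) (by positivity)
        _ = ((boundary W (GN n) : ℝ) / ((GN n).card : ℝ))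
            * ((((k : ℝ) - 1) / 2) * regFactor g ^ k) := by ring
    · have h0 := hGN.mul_const ((((k : ℝ) - 1) / 2) * regFactor g ^ k)
      simpa using h0

end
end

section
/- For every k ∈ ℕ and every finite subset G_n ⊆ G, |Tr((W_{G_n})^k) − Σ_{i∈G_n} (W^k)(i,i)| ≤ δ_n·(k−1)·2^{k−1}, where W_{G_n} denotes the G_n × G_n matrix (W(i,j))_{i,j∈G_n} and (W^k)(i,i) is the (i,i) entry of the k-th power of the infinite kernel W. Consequently, if δ_n/m_n → 0 then (1/m_n)(Tr((W_{G_n})^k) − Σ_{i∈G_n}(W^k)(i,i)) → 0 for every k, so the empirical distribution of eigenvalues of W_{G_n} converges weakly to a measure μ if and only if the moment condition (1/m_n) Σ_{i∈G_n} (W^k)(i,i) → ∫ λ^k dμ(λ) holds for every k. -/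
open scoped BigOperators Classical
open MeasureTheory Filter ProbabilityTheory

noncomputable section

variable {G : Type*}

lemma aux_rowsum (W : G → G → ℝ) (D : ℕ)
    (hfin : ∀ i, ({j | W i j ≠ 0} : Set G).Finite)
    (hcard : ∀ i, ({j | W i j ≠ 0} : Set G).ncard ≤ D)
    (hbnd : ∀ i j, |W i j| ≤ 1 / (D : ℝ))
    (i : G) (T : Finset G) : ∑ j ∈ T, |W i j| ≤ 1 := by
  have h1 : ∑ j ∈ T, |W i j| = ∑ j ∈ T ∩ (hfin i).toFinset, |W i j| := by
    refine (Finset.sum_subset Finset.inter_subset_left ?_).symm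
    intro x hx hx'
    have : W i x = 0 := by
      by_contra h
      exact hx' (Finset.mem_inter.2 ⟨hx, (hfin i).mem_toFinset.2 h⟩)
    simp [this]
  rcases Nat.eq_zero_or_pos D with hD0 | hD
  · have : ∀ j, W i j = 0 := by
      intro j
      have := hbnd i j
      rw [hD0] at this
      have h0 : |W i j| = 0 := le_antisymm (by simpa using this) (abs_nonneg _)
      simpa using abs_eq_zero.mp h0
    simp [this]
  rw [h1]
  calc ∑ j ∈ T ∩ (hfin i).toFinset, |W i j|
      ≤ ∑ j ∈ (hfin i).toFinset, |W i j| :=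
        Finset.sum_le_sum_of_subset_of_nonneg Finset.inter_subset_right
          (fun _ _ _ => abs_nonneg _)
    _ ≤ (hfin i).toFinset.card • (1 / (D : ℝ)) :=
        Finset.sum_le_card_nsmul _ _ _ (fun j _ => hbnd i j)
    _ = ((hfin i).toFinset.card : ℝ) * (1 / (D : ℝ)) := by simp [nsmul_eq_mul]
    _ ≤ (D : ℝ) * (1 / (D : ℝ)) := by
        apply mul_le_mul_of_nonneg_right _ (by positivity)
        have := hcard i
        rw [Set.ncard_eq_toFinset_card _ (hfin i)] at this
        exact_mod_cast this
    _ = 1 := by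
        field_simp

lemma aux_Wpow_succ (W : G → G → ℝ)
    (hfin : ∀ i, ({j | W i j ≠ 0} : Set G).Finite) (h : ℕ) (i j : G) :
    Wpow W (h+1) i j = ∑ l ∈ (hfin i).toFinset, W i l * Wpow W h l j := by
  refine tsum_eq_sum ?_
  intro l hl
  have : W i l = 0 := by
    by_contra hc
    exact hl ((hfin i).mem_toFinset.2 hc)
  simp [this]

lemma aux_abs_Wpow_sum (W : G → G → ℝ) (D : ℕ)
    (hfin : ∀ i, ({j | W i j ≠ 0} : Set G).Finite)
    (hcard : ∀ i, ({j | W i j ≠ 0} : Set G).ncard ≤ D)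
    (hbnd : ∀ i j, |W i j| ≤ 1 / (D : ℝ)) :
    ∀ (h : ℕ) (i : G) (T : Finset G), ∑ j ∈ T, |Wpow W h i j| ≤ 1 := by
  intro h
  induction h with
  | zero =>
    intro i T
    have : ∀ j ∈ T, |Wpow W 0 i j| = if i = j then (1:ℝ) else 0 := by
      intro j _; simp only [Wpow]; split <;> simp
    rw [Finset.sum_congr rfl this, Finset.sum_ite_eq]
    split <;> norm_num
  | succ h ih =>
    intro i T
    calc ∑ j ∈ T, |Wpow W (h+1) i j|
        = ∑ j ∈ T, |∑ l ∈ (hfin i).toFinset, W i l * Wpow W h l j| := by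
          simp only [aux_Wpow_succ W hfin]
      _ ≤ ∑ j ∈ T, ∑ l ∈ (hfin i).toFinset, |W i l| * |Wpow W h l j| := by
          refine Finset.sum_le_sum fun j _ => ?_
          exact (Finset.abs_sum_le_sum_abs _ _).trans (le_of_eq (by simp [abs_mul]))
      _ = ∑ l ∈ (hfin i).toFinset, |W i l| * ∑ j ∈ T, |Wpow W h l j| := by
          rw [Finset.sum_comm]; simp [Finset.mul_sum]
      _ ≤ ∑ l ∈ (hfin i).toFinset, |W i l| * 1 := by
          refine Finset.sum_le_sum fun l _ => ?_
          exact mul_le_mul_of_nonneg_left (ih l T) (abs_nonneg _)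
      _ ≤ 1 := by
          simp only [mul_one]
          exact aux_rowsum W D hfin hcard hbnd i _
lemma main_bound (W : G → G → ℝ) (D : ℕ)
    (hsymm : ∀ i j, W i j = W j i)
    (hfin : ∀ i, ({j | W i j ≠ 0} : Set G).Finite)
    (hcard : ∀ i, ({j | W i j ≠ 0} : Set G).ncard ≤ D)
    (hbnd : ∀ i j, |W i j| ≤ 1 / (D : ℝ))
    (Gn : Finset G) (k : ℕ) :
    |Matrix.trace ((Matrix.of fun i j : Gn => W (i : G) (j : G)) ^ k)
        - ∑ i ∈ Gn, Wpow W k i i|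
      ≤ ((Gn.filter (fun i => ∃ j, j ∉ Gn ∧ W i j ≠ 0)).card : ℝ) * ((k - 1 : ℕ) : ℝ) := by
  classical
  set A : Matrix Gn Gn ℝ := Matrix.of fun i j : Gn => W (i : G) (j : G) with hA
  set E : ℕ → Gn → Gn → ℝ := fun k i j => Wpow W k i j - (A ^ k) i j with hEdef
  set S : ℕ → ℝ := fun k => ∑ i : Gn, ∑ j : Gn, |E k i j| with hSdef
  set N : G → Finset G := fun i => (hfin i).toFinset with hN
  set Bf : Finset G := Gn.filter (fun i => ∃ j, j ∉ Gn ∧ W i j ≠ 0) with hBf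
  have hNmem : ∀ i l : G, l ∈ N i ↔ W i l ≠ 0 := fun i l => (hfin i).mem_toFinset
  have hW1 : ∀ i j : G, Wpow W 1 i j = W i j := by
    intro i j
    show ∑' l, W i l * Wpow W 0 l j = W i j
    have hc : ∀ l, W i l * Wpow W 0 l j = if l = j then W i j else 0 := by
      intro l; simp only [Wpow]
      split
      · next h => subst h; simp
      · simp
    rw [tsum_congr hc, tsum_ite_eq]
  have hE0 : ∀ i j : Gn, E 0 i j = 0 := by
    intro i j
    simp only [hEdef, pow_zero, Matrix.one_apply, Wpow, Subtype.ext_iff]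
    split <;> simp_all
  have hE1 : ∀ i j : Gn, E 1 i j = 0 := by
    intro i j
    simp only [hEdef, pow_one, hW1, hA, Matrix.of_apply, sub_self]
  -- key recursion identity
  have hkey : ∀ (k : ℕ) (i j : Gn), E (k+1) i j =
      (∑ l : Gn, W i l * E k l j) + ∑ l ∈ N i \ Gn, W i l * Wpow W k l j := by
    intro k i j
    have e1 : Wpow W (k+1) (i : G) (j : G)
        = ∑ l ∈ N i, W i l * Wpow W k l j := aux_Wpow_succ W hfin k i j
    have e2 : (∑ l ∈ (N (i:G)) ∩ Gn, W i l * Wpow W k l (j:G))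
        + (∑ l ∈ N (i:G) \ Gn, W i l * Wpow W k l (j:G))
        = ∑ l ∈ N (i:G), W i l * Wpow W k l (j:G) :=
      Finset.sum_inter_add_sum_sdiff _ _ _
    have e3 : ∑ l ∈ (N (i:G)) ∩ Gn, W i l * Wpow W k l (j:G)
        = ∑ l ∈ Gn, W i l * Wpow W k l (j:G) := by
      refine Finset.sum_subset Finset.inter_subset_right ?_
      intro x hx hx'
      have : W i x = 0 := by
        by_contra h
        exact hx' (Finset.mem_inter.2 ⟨(hNmem i x).2 h, hx⟩)
      simp [this]
    have e4 : ∑ l ∈ Gn, W i l * Wpow W k l (j:G)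
        = ∑ l : Gn, W i l * Wpow W k l (j:G) :=
      (Finset.sum_coe_sort Gn (fun l => W i l * Wpow W k l (j:G))).symm
    have e5 : (A ^ (k+1)) i j = ∑ l : Gn, W i l * (A ^ k) l j := by
      rw [pow_succ', Matrix.mul_apply]
      rfl
    have e6 : (∑ l : Gn, W (i:G) (l:G) * E k l j)
        = (∑ l : Gn, W i l * Wpow W k l (j:G)) - ∑ l : Gn, W i l * (A ^ k) l j := by
      rw [← Finset.sum_sub_distrib]
      refine Finset.sum_congr rfl fun l _ => ?_
      simp only [hEdef]; ring
    have : E (k+1) i j = Wpow W (k+1) (i:G) (j:G) - (A ^ (k+1)) i j := rfl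
    rw [this, e1, ← e2, e3, e4, e5, e6]
    ring
  -- the boundary remainder bound
  have hRbound : ∀ k : ℕ,
      ∑ i : Gn, ∑ j : Gn, |∑ l ∈ N i \ Gn, W i l * Wpow W k l j| ≤ (Bf.card : ℝ) := by
    intro k
    set R : G → ℝ := fun a => ∑ j ∈ Gn, |∑ l ∈ N a \ Gn, W a l * Wpow W k l j| with hR
    have hconv : ∀ i : Gn, (∑ j : Gn, |∑ l ∈ N i \ Gn, W i l * Wpow W k l j|) = R i := by
      intro i
      exact Finset.sum_coe_sort Gn (fun j => |∑ l ∈ N i \ Gn, W (i:G) l * Wpow W k l j|)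
    have hzero : ∀ a ∈ Gn, a ∉ Bf → R a = 0 := by
      intro a ha haB
      have hempty : N a \ Gn = ∅ := by
        rw [Finset.eq_empty_iff_forall_notMem]
        intro l hl
        rcases Finset.mem_sdiff.1 hl with ⟨hlN, hlG⟩
        exact haB (Finset.mem_filter.2 ⟨ha, ⟨l, hlG, (hNmem a l).1 hlN⟩⟩)
      simp [hR, hempty]
    have hone : ∀ a : G, R a ≤ 1 := by
      intro a
      calc R a ≤ ∑ j ∈ Gn, ∑ l ∈ N a \ Gn, |W a l| * |Wpow W k l j| := by
            refine Finset.sum_le_sum fun j _ => ?_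
            exact (Finset.abs_sum_le_sum_abs _ _).trans (le_of_eq (by simp [abs_mul]))
        _ = ∑ l ∈ N a \ Gn, |W a l| * ∑ j ∈ Gn, |Wpow W k l j| := by
            rw [Finset.sum_comm]; simp [Finset.mul_sum]
        _ ≤ ∑ l ∈ N a \ Gn, |W a l| * 1 := by
            refine Finset.sum_le_sum fun l _ => ?_
            exact mul_le_mul_of_nonneg_left (aux_abs_Wpow_sum W D hfin hcard hbnd k l Gn)
              (abs_nonneg _)
        _ ≤ 1 := by
            simp only [mul_one]
            exact aux_rowsum W D hfin hcard hbnd a _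
    calc ∑ i : Gn, ∑ j : Gn, |∑ l ∈ N i \ Gn, W i l * Wpow W k l j|
        = ∑ i : Gn, R i := by exact Finset.sum_congr rfl fun i _ => hconv i
      _ = ∑ i ∈ Gn, R i := Finset.sum_coe_sort Gn R
      _ = ∑ i ∈ Bf, R i := by
          refine (Finset.sum_subset (Finset.filter_subset _ _) ?_).symm
          intro a ha haB
          exact hzero a ha haB
      _ ≤ ∑ i ∈ Bf, 1 := Finset.sum_le_sum fun a _ => hone a
      _ = (Bf.card : ℝ) := by simp
  -- main contraction bound
  have hMain : ∀ k : ℕ,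
      ∑ i : Gn, ∑ j : Gn, |∑ l : Gn, W i l * E k l j| ≤ S k := by
    intro k
    have hcol : ∀ l : Gn, ∑ i : Gn, |W (i:G) (l:G)| ≤ 1 := by
      intro l
      have : ∑ i : Gn, |W (i:G) (l:G)| = ∑ i ∈ Gn, |W i (l:G)| :=
        Finset.sum_coe_sort Gn (fun i => |W i (l:G)|)
      rw [this]
      have : ∑ i ∈ Gn, |W i (l:G)| = ∑ i ∈ Gn, |W (l:G) i| := by
        refine Finset.sum_congr rfl fun i _ => by rw [hsymm]
      rw [this]
      exact aux_rowsum W D hfin hcard hbnd _ _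
    calc ∑ i : Gn, ∑ j : Gn, |∑ l : Gn, W i l * E k l j|
        ≤ ∑ i : Gn, ∑ j : Gn, ∑ l : Gn, |W (i:G) (l:G)| * |E k l j| := by
          refine Finset.sum_le_sum fun i _ => Finset.sum_le_sum fun j _ => ?_
          exact (Finset.abs_sum_le_sum_abs _ _).trans (le_of_eq (by simp [abs_mul]))
      _ = ∑ l : Gn, (∑ i : Gn, |W (i:G) (l:G)|) * ∑ j : Gn, |E k l j| := by
          have h1 : ∀ i : Gn, ∑ j : Gn, ∑ l : Gn, |W (i:G) (l:G)| * |E k l j|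
              = ∑ l : Gn, ∑ j : Gn, |W (i:G) (l:G)| * |E k l j| := fun i => Finset.sum_comm
          rw [Finset.sum_congr rfl (fun i _ => h1 i), Finset.sum_comm]
          refine Finset.sum_congr rfl fun l _ => ?_
          rw [Finset.sum_mul]
          exact Finset.sum_congr rfl fun i _ => (Finset.mul_sum _ _ _).symm
      _ ≤ ∑ l : Gn, 1 * ∑ j : Gn, |E k l j| := by
          refine Finset.sum_le_sum fun l _ => ?_
          exact mul_le_mul_of_nonneg_right (hcol l)
            (Finset.sum_nonneg fun j _ => abs_nonneg _)
      _ = S k := by simp [hSdef]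
  have hrec : ∀ k, S (k+1) ≤ S k + (Bf.card : ℝ) := by
    intro k
    calc S (k+1) = ∑ i : Gn, ∑ j : Gn, |E (k+1) i j| := rfl
      _ ≤ ∑ i : Gn, ∑ j : Gn, (|∑ l : Gn, W i l * E k l j|
            + |∑ l ∈ N i \ Gn, W i l * Wpow W k l j|) := by
          refine Finset.sum_le_sum fun i _ => Finset.sum_le_sum fun j _ => ?_
          rw [hkey k i j]; exact abs_add_le _ _
      _ = (∑ i : Gn, ∑ j : Gn, |∑ l : Gn, W i l * E k l j|)
          + ∑ i : Gn, ∑ j : Gn, |∑ l ∈ N i \ Gn, W i l * Wpow W k l j| := by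
          simp [Finset.sum_add_distrib]
      _ ≤ S k + (Bf.card : ℝ) := add_le_add (hMain k) (hRbound k)
  have hS1 : S 1 = 0 := by simp [hSdef, hE1]
  have hSk : ∀ k : ℕ, S (k+1) ≤ (Bf.card : ℝ) * (k : ℝ) := by
    intro k
    induction k with
    | zero => simp [hS1]
    | succ k ih =>
      calc S (k+1+1) ≤ S (k+1) + (Bf.card : ℝ) := hrec (k+1)
        _ ≤ (Bf.card : ℝ) * (k : ℝ) + (Bf.card : ℝ) := add_le_add_left ih _
        _ = (Bf.card : ℝ) * ((k+1 : ℕ) : ℝ) := by push_cast; ring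
  have hSall : ∀ k : ℕ, S k ≤ (Bf.card : ℝ) * ((k - 1 : ℕ) : ℝ) := by
    intro k
    cases k with
    | zero => simp [hSdef, hE0]
    | succ k => simpa using hSk k
  have htr : Matrix.trace (A ^ k) = ∑ i : Gn, (A ^ k) i i := by
    simp [Matrix.trace, Matrix.diag]
  have hsum : ∑ i ∈ Gn, Wpow W k i i = ∑ i : Gn, Wpow W k i i :=
    (Finset.sum_coe_sort Gn (fun i => Wpow W k i i)).symm
  calc |Matrix.trace (A ^ k) - ∑ i ∈ Gn, Wpow W k i i|
      = |∑ i : Gn, ((A ^ k) i i - Wpow W k (i:G) (i:G))| := by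
        rw [htr, hsum, Finset.sum_sub_distrib]
    _ = |∑ i : Gn, -(E k i i)| := by
        congr 1
        refine Finset.sum_congr rfl fun i _ => ?_
        simp only [hEdef]; ring
    _ = |∑ i : Gn, E k i i| := by rw [Finset.sum_neg_distrib, abs_neg]
    _ ≤ ∑ i : Gn, |E k i i| := Finset.abs_sum_le_sum_abs _ _
    _ ≤ S k := Finset.sum_le_sum fun i _ =>
        Finset.single_le_sum (f := fun j => |E k i j|) (fun j _ => abs_nonneg _)
          (Finset.mem_univ i)
    _ ≤ (Bf.card : ℝ) * ((k - 1 : ℕ) : ℝ) := hSall k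


/-- Comparison between `Tr((W_{G_n})^k)` and `Σ_{i∈G_n}(W^k)(i,i)`:
the difference is at most `δ_n·(k−1)·2^{k−1}`, hence along a sequence with `δ_n/m_n → 0`
the normalized difference tends to `0`, and the two moment conditions for weak
convergence of the empirical eigenvalue distribution are equivalent. -/
theorem stmt6 {G : Type*} [Countable G] (W : G → G → ℝ) (D : ℕ) (hD : 0 < D)
    (hker : KernelHyp W D) :
    (∀ (Gn : Finset G) (k : ℕ),
      |Matrix.trace ((Matrix.of fun i j : Gn => W (i : G) (j : G)) ^ k)
          - ∑ i ∈ Gn, Wpow W k i i|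
        ≤ (boundary W Gn : ℝ) * ((k - 1 : ℕ) : ℝ) * 2 ^ (k - 1 : ℕ)) ∧
    (∀ GN : ℕ → Finset G,
      Tendsto (fun n => (boundary W (GN n) : ℝ) / ((GN n).card : ℝ)) atTop (nhds 0) →
      (∀ k : ℕ, Tendsto (fun n => (1 / ((GN n).card : ℝ)) *
          (Matrix.trace ((Matrix.of fun i j : (GN n) => W (i : G) (j : G)) ^ k)
            - ∑ i ∈ GN n, Wpow W k i i)) atTop (nhds 0)) ∧
      (∀ μ : Measure ℝ,
        ((∀ k : ℕ, Tendsto (fun n => (1 / ((GN n).card : ℝ)) *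
            Matrix.trace ((Matrix.of fun i j : (GN n) => W (i : G) (j : G)) ^ k))
          atTop (nhds (∫ x, x ^ k ∂μ))) ↔
        (∀ k : ℕ, Tendsto (fun n => (1 / ((GN n).card : ℝ)) * ∑ i ∈ GN n, Wpow W k i i)
          atTop (nhds (∫ x, x ^ k ∂μ)))))) := by
  obtain ⟨hsymm, hfin, hcard, hbnd⟩ := hker
  have hbset : ∀ Gn : Finset G,
      boundary W Gn = (Gn.filter (fun i => ∃ j, j ∉ Gn ∧ W i j ≠ 0)).card := by
    intro Gn
    have hset : ({i | i ∈ Gn ∧ ∃ j, j ∉ Gn ∧ W i j ≠ 0} : Set G)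
        = ↑(Gn.filter (fun i => ∃ j, j ∉ Gn ∧ W i j ≠ 0)) := by
      ext a; simp [Finset.mem_coe, Finset.mem_filter]
    rw [boundary, hset, Set.ncard_coe_finset]
  have part1 : ∀ (Gn : Finset G) (k : ℕ),
      |Matrix.trace ((Matrix.of fun i j : Gn => W (i : G) (j : G)) ^ k)
          - ∑ i ∈ Gn, Wpow W k i i|
        ≤ (boundary W Gn : ℝ) * ((k - 1 : ℕ) : ℝ) * 2 ^ (k - 1 : ℕ) := by
    intro Gn k
    have h1 := main_bound W D hsymm hfin hcard hbnd Gn k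
    rw [← hbset Gn] at h1
    calc |Matrix.trace ((Matrix.of fun i j : Gn => W (i : G) (j : G)) ^ k)
          - ∑ i ∈ Gn, Wpow W k i i|
        ≤ (boundary W Gn : ℝ) * ((k - 1 : ℕ) : ℝ) := h1
      _ ≤ (boundary W Gn : ℝ) * ((k - 1 : ℕ) : ℝ) * 2 ^ (k - 1 : ℕ) := by
          refine le_mul_of_one_le_right ?_ (one_le_pow₀ one_le_two)
          positivity
  refine ⟨part1, fun GN hδ => ?_⟩
  have hzero : ∀ k : ℕ, Tendsto (fun n => (1 / ((GN n).card : ℝ)) *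
      (Matrix.trace ((Matrix.of fun i j : (GN n) => W (i : G) (j : G)) ^ k)
        - ∑ i ∈ GN n, Wpow W k i i)) atTop (nhds 0) := by
    intro k
    refine squeeze_zero_norm (a := fun n => (boundary W (GN n) : ℝ) / ((GN n).card : ℝ)
      * (((k - 1 : ℕ) : ℝ) * 2 ^ (k - 1 : ℕ))) ?_ ?_
    · intro n
      rw [Real.norm_eq_abs, abs_mul, abs_of_nonneg (a := 1 / ((GN n).card : ℝ)) (by positivity)]
      calc (1 / ((GN n).card : ℝ)) *
            |Matrix.trace ((Matrix.of fun i j : (GN n) => W (i : G) (j : G)) ^ k)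
              - ∑ i ∈ GN n, Wpow W k i i|
          ≤ (1 / ((GN n).card : ℝ)) *
            ((boundary W (GN n) : ℝ) * ((k - 1 : ℕ) : ℝ) * 2 ^ (k - 1 : ℕ)) :=
            mul_le_mul_of_nonneg_left (part1 (GN n) k) (by positivity)
        _ = (boundary W (GN n) : ℝ) / ((GN n).card : ℝ)
            * (((k - 1 : ℕ) : ℝ) * 2 ^ (k - 1 : ℕ)) := by ring
    · simpa using hδ.mul_const (((k - 1 : ℕ) : ℝ) * 2 ^ (k - 1 : ℕ))
  refine ⟨hzero, fun μ => ⟨fun hT k => ?_, fun hY k => ?_⟩⟩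
  · have h2 := (hT k).sub (hzero k)
    rw [sub_zero] at h2
    exact h2.congr (fun n => by ring)
  · have h2 := (hY k).add (hzero k)
    rw [add_zero] at h2
    exact h2.congr (fun n => by ring)

end
end

section
/- (Exact correction lemma.) Let f and g be real power series with Σ|coefficients| < ∞, and assume that f or g is a polynomial of degree at most P. Then, under Assumption 4, the unbiased quadratic form satisfies Tr(K_n(f)·Q_n(g)) = Tr(K_n(f·g)), where f·g is the Cauchy product of the power series. -/
open scoped BigOperators Classical
open MeasureTheory Filter ProbabilityTheory

noncomputable section

variable {G : Type*}

/-- Equivalence of pairs of vertices: `μ_{ij} = μ_{kl}` iff `(W^h)(i,j) = (W^h)(k,l)` for all `h`. -/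
def muEquiv (W : G → G → ℝ) (i j k l : G) : Prop :=
  ∀ h : ℕ, Wpow W h i j = Wpow W h k l

/-- `distLe W P i j` : the graph distance between `i` and `j` (for the edge set
`{(i,j) : W(i,j) ≠ 0}`) is at most `P`. -/
def distLe (W : G → G → ℝ) : ℕ → G → G → Prop
  | 0, i, j => i = j
  | (P + 1), i, j => distLe W P i j ∨ ∃ m, W i m ≠ 0 ∧ distLe W P m j

/-- The boundary-correction matrix `B^{(n)}`. -/
def Bmat (W : G → G → ℝ) (P : ℕ) (Gn : Finset G) : Matrix Gn Gn ℝ :=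
  Matrix.of fun i j =>
    if distLe W P (i : G) (j : G) then
      (({p : G × G | p.1 ∈ Gn ∧ muEquiv W p.1 p.2 i j} : Set (G × G)).ncard : ℝ) /
      (({p : G × G | p.1 ∈ Gn ∧ p.2 ∈ Gn ∧ muEquiv W p.1 p.2 i j} : Set (G × G)).ncard : ℝ)
    else 1

/-- The unbiased (tapered) matrix `Q_n(g) = B^{(n)} ⊙ K_n(g)`. -/
def Qn (W : G → G → ℝ) (P : ℕ) (g : ℕ → ℝ) (Gn : Finset G) : Matrix Gn Gn ℝ :=
  Matrix.of fun i j => Bmat W P Gn i j * Kn W g Gn i j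

/-- Assumption 4: the set `V_P` of equivalence classes of pairs at distance at most `P`
is finite, and every class is realized by a pair of vertices in `G_n`. -/
def Assumption4 (W : G → G → ℝ) (P : ℕ) (Gn : Finset G) : Prop :=
  ({S : Set (G × G) | ∃ i j : G, distLe W P i j ∧
      S = {p : G × G | muEquiv W p.1 p.2 i j}} : Set (Set (G × G))).Finite ∧
  ∀ i j : G, distLe W P i j → ∃ k ∈ Gn, ∃ l ∈ Gn, muEquiv W k l i j

section Stmt8Aux
variable {G : Type*} {W : G → G → ℝ}
variable {G : Type*} {W : G → G → ℝ}

private lemma tsum_prod_antidiagonal {F : ℕ × ℕ → ℝ} (h : Summable F) :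
    ∑' p : ℕ × ℕ, F p = ∑' n : ℕ, ∑ kl ∈ Finset.HasAntidiagonal.antidiagonal n, F kl := by
  conv_rhs => congr; ext; rw [← Finset.sum_finset_coe, ← tsum_fintype (L := SummationFilter.unconditional _)]
  rw [← Finset.HasAntidiagonal.sigmaAntidiagonalEquivProd.tsum_eq F]
  exact Summable.tsum_sigma' (fun n => (hasSum_fintype _).summable)
    (Finset.HasAntidiagonal.sigmaAntidiagonalEquivProd.summable_iff.mpr h)

private lemma exists_ne_zero_of_tsum_ne_zero {β : Type*} {f : β → ℝ} (h : ∑' n, f n ≠ 0) :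
    ∃ n, f n ≠ 0 := by
  by_contra hc; push_neg at hc
  exact h (by rw [funext hc]; exact tsum_zero)

private lemma Wpow_zero (i j : G) : Wpow W 0 i j = if i = j then (1:ℝ) else 0 := rfl
private lemma Wpow_succ (h : ℕ) (i j : G) :
    Wpow W (h+1) i j = ∑' k, W i k * Wpow W h k j := rfl

private lemma Wpow_succ_sum (hfin : ∀ i, ({j | W i j ≠ 0} : Set G).Finite)
    (h : ℕ) (i j : G) :
    Wpow W (h+1) i j = ∑ k ∈ (hfin i).toFinset, W i k * Wpow W h k j := by
  rw [Wpow_succ]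
  refine tsum_eq_sum ?_
  intro k hk
  have h0 : W i k = 0 := by
    by_contra hne; exact hk ((hfin i).mem_toFinset.mpr hne)
  simp [h0]

private lemma distLe_mono {P Q : ℕ} (hPQ : P ≤ Q) {i j : G} (h : distLe W P i j) :
    distLe W Q i j := by
  induction hPQ with
  | refl => exact h
  | step _ ih => exact Or.inl ih

private lemma Wpow_ne_zero_imp (h : ℕ) :
    ∀ i j : G, Wpow W h i j ≠ 0 → distLe W h i j := by
  induction h with
  | zero =>
    intro i j hne
    by_contra hij
    exact hne (by rw [Wpow_zero, if_neg (fun he : i = j => hij he)])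
  | succ h ih =>
    intro i j hne
    rw [Wpow_succ] at hne
    have hex : ∃ k, W i k * Wpow W h k j ≠ 0 := exists_ne_zero_of_tsum_ne_zero hne
    obtain ⟨k, hk⟩ := hex
    exact Or.inr ⟨k, fun h0 => hk (by rw [h0, zero_mul]), ih k j (fun h0 => hk (by rw [h0, mul_zero]))⟩

private lemma ballFinite (hfin : ∀ i, ({j | W i j ≠ 0} : Set G).Finite) (P : ℕ) :
    ∀ i : G, ({j | distLe W P i j} : Set G).Finite := by
  induction P with
  | zero =>
    intro i
    refine (Set.finite_singleton i).subset ?_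
    intro j hj
    have : i = j := hj
    simp [this.symm]
  | succ P ih =>
    intro i
    have hsub : ({j | distLe W (P+1) i j} : Set G) ⊆
        {j | distLe W P i j} ∪ ⋃ m ∈ {m | W i m ≠ 0}, {j | distLe W P m j} := by
      intro j hj
      have hj' : distLe W P i j ∨ ∃ m, W i m ≠ 0 ∧ distLe W P m j := hj
      rcases hj' with h1 | ⟨m, hm, hmj⟩
      · exact Or.inl h1
      · exact Or.inr (Set.mem_biUnion hm hmj)
    exact ((ih i).union ((hfin i).biUnion (fun m _ => ih m))).subset hsub

private lemma distLe_append {P : ℕ} :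
    ∀ {i m j : G}, distLe W P i m → W m j ≠ 0 → distLe W (P+1) i j := by
  induction P with
  | zero =>
    intro i m j him hmj
    have : i = m := him
    subst this
    exact Or.inr ⟨j, hmj, rfl⟩
  | succ P ih =>
    intro i m j him hmj
    rcases (him : distLe W P i m ∨ ∃ k, W i k ≠ 0 ∧ distLe W P k m) with h1 | ⟨k, hk, hkm⟩
    · exact Or.inl (ih h1 hmj)
    · exact Or.inr ⟨k, hk, ih hkm hmj⟩

private lemma distLe_symm (hsym : ∀ i j, W i j = W j i) {P : ℕ} :
    ∀ {i j : G}, distLe W P i j → distLe W P j i := by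
  induction P with
  | zero => intro i j h; exact (h : i = j).symm
  | succ P ih =>
    intro i j h
    rcases (h : distLe W P i j ∨ ∃ m, W i m ≠ 0 ∧ distLe W P m j) with h1 | ⟨m, hm, hmj⟩
    · exact Or.inl (ih h1)
    · exact distLe_append (ih hmj) (by rw [hsym m i]; exact hm)

private lemma rowsum_le_one {D : ℕ} (hD : 0 < D)
    (hfin : ∀ i, ({j | W i j ≠ 0} : Set G).Finite)
    (hcard : ∀ i, ({j | W i j ≠ 0} : Set G).ncard ≤ D)
    (hbd : ∀ i j, |W i j| ≤ 1 / (D:ℝ)) (i : G) :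
    ∑ k ∈ (hfin i).toFinset, |W i k| ≤ 1 := by
  have h1 : ∑ k ∈ (hfin i).toFinset, |W i k| ≤ ((hfin i).toFinset.card : ℝ) * (1/(D:ℝ)) := by
    have := Finset.sum_le_card_nsmul (hfin i).toFinset (fun k => |W i k|) (1/(D:ℝ))
      (fun k _ => hbd i k)
    simpa [nsmul_eq_mul] using this
  have h2 : ((hfin i).toFinset.card : ℝ) ≤ (D:ℝ) := by
    have h3 := hcard i
    rw [Set.ncard_eq_toFinset_card _ (hfin i)] at h3
    exact_mod_cast h3
  have hDne : (D:ℝ) ≠ 0 := Nat.cast_ne_zero.mpr hD.ne'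
  calc ∑ k ∈ (hfin i).toFinset, |W i k| ≤ ((hfin i).toFinset.card : ℝ) * (1/(D:ℝ)) := h1
    _ ≤ (D:ℝ) * (1/(D:ℝ)) := by
        apply mul_le_mul_of_nonneg_right h2
        positivity
    _ = 1 := by field_simp

private lemma Wpow_abs_le_one {D : ℕ} (hD : 0 < D)
    (hfin : ∀ i, ({j | W i j ≠ 0} : Set G).Finite)
    (hcard : ∀ i, ({j | W i j ≠ 0} : Set G).ncard ≤ D)
    (hbd : ∀ i j, |W i j| ≤ 1 / (D:ℝ)) :
    ∀ (h : ℕ) (i j : G), |Wpow W h i j| ≤ 1 := by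
  intro h
  induction h with
  | zero =>
    intro i j
    rw [Wpow_zero]
    split <;> norm_num
  | succ h ih =>
    intro i j
    rw [Wpow_succ_sum hfin]
    calc |∑ k ∈ (hfin i).toFinset, W i k * Wpow W h k j|
        ≤ ∑ k ∈ (hfin i).toFinset, |W i k * Wpow W h k j| := Finset.abs_sum_le_sum_abs _ _
      _ ≤ ∑ k ∈ (hfin i).toFinset, |W i k| := by
          refine Finset.sum_le_sum fun k _ => ?_
          rw [abs_mul]
          calc |W i k| * |Wpow W h k j| ≤ |W i k| * 1 :=
                mul_le_mul_of_nonneg_left (ih k j) (abs_nonneg _)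
            _ = |W i k| := mul_one _
      _ ≤ 1 := rowsum_le_one hD hfin hcard hbd i

private lemma Wpow_succ_right (hsym : ∀ i j, W i j = W j i)
    (hfin : ∀ i, ({j | W i j ≠ 0} : Set G).Finite) (h : ℕ) :
    ∀ (i j : G), Wpow W (h+1) i j = ∑' l, Wpow W h i l * W l j := by
  induction h with
  | zero =>
    intro i j
    rw [Wpow_succ]
    rw [tsum_eq_single j (fun k hk => by simp [Wpow_zero, hk])]
    rw [tsum_eq_single i (fun l hl => by simp [Wpow_zero, Ne.symm hl])]
    simp [Wpow_zero]
  | succ h ih =>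
    intro i j
    rw [Wpow_succ]
    have step1 : ∀ k, Wpow W (h+1) k j = ∑ l ∈ (hfin j).toFinset, Wpow W h k l * W l j := by
      intro k
      rw [ih k j]
      refine tsum_eq_sum fun l hl => ?_
      have h0 : W j l = 0 := by
        by_contra hne; exact hl ((hfin j).mem_toFinset.mpr hne)
      rw [hsym l j, h0, mul_zero]
    calc (∑' k, W i k * Wpow W (h+1) k j)
        = ∑ k ∈ (hfin i).toFinset, W i k * Wpow W (h+1) k j := tsum_eq_sum (fun k hk => by
            have h0 : W i k = 0 := by
              by_contra hne; exact hk ((hfin i).mem_toFinset.mpr hne)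
            rw [h0, zero_mul])
      _ = ∑ k ∈ (hfin i).toFinset, ∑ l ∈ (hfin j).toFinset, W i k * (Wpow W h k l * W l j) := by
            refine Finset.sum_congr rfl fun k _ => ?_
            rw [step1 k, Finset.mul_sum]
      _ = ∑ l ∈ (hfin j).toFinset, (∑ k ∈ (hfin i).toFinset, W i k * Wpow W h k l) * W l j := by
            rw [Finset.sum_comm]
            simp [Finset.sum_mul, mul_assoc]
      _ = ∑ l ∈ (hfin j).toFinset, Wpow W (h+1) i l * W l j := by
            refine Finset.sum_congr rfl fun l _ => ?_
            rw [Wpow_succ_sum hfin]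
      _ = ∑' l, Wpow W (h+1) i l * W l j := by
            refine (tsum_eq_sum fun l hl => ?_).symm
            have h0 : W j l = 0 := by
              by_contra hne; exact hl ((hfin j).mem_toFinset.mpr hne)
            rw [hsym l j, h0, mul_zero]

private lemma Wpow_symm (hsym : ∀ i j, W i j = W j i)
    (hfin : ∀ i, ({j | W i j ≠ 0} : Set G).Finite) (h : ℕ) :
    ∀ (i j : G), Wpow W h i j = Wpow W h j i := by
  induction h with
  | zero => intro i j; rw [Wpow_zero, Wpow_zero]; simp [eq_comm]
  | succ h ih =>
    intro i j
    rw [Wpow_succ_right hsym hfin h i j, Wpow_succ]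
    exact tsum_congr fun k => by rw [ih i k, hsym k j, mul_comm]

private lemma Wpow_add (hfin : ∀ i, ({j | W i j ≠ 0} : Set G).Finite) (a : ℕ) :
    ∀ (b : ℕ) (i j : G), Wpow W (a+b) i j = ∑' k, Wpow W a i k * Wpow W b k j := by
  induction a with
  | zero =>
    intro b i j
    rw [zero_add]
    rw [tsum_eq_single i (fun k hk => by simp [Wpow_zero, Ne.symm hk])]
    simp [Wpow_zero]
  | succ a ih =>
    intro b i j
    have key : Wpow W (a+1+b) i j = ∑ k ∈ (hfin i).toFinset, W i k * Wpow W (a+b) k j := by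
      have he : a+1+b = (a+b)+1 := by omega
      rw [he, Wpow_succ_sum hfin]
    rw [key]
    have inner : ∀ k ∈ (hfin i).toFinset, Wpow W (a+b) k j
        = ∑ l ∈ (ballFinite hfin (a+1) i).toFinset, Wpow W a k l * Wpow W b l j := by
      intro k hk
      rw [ih b k j]
      refine tsum_eq_sum fun l hl => ?_
      have hWa : Wpow W a k l = 0 := by
        by_contra hne
        have hd : distLe W a k l := Wpow_ne_zero_imp a k l hne
        have hik : W i k ≠ 0 := (hfin i).mem_toFinset.mp hk
        exact hl ((ballFinite hfin (a+1) i).mem_toFinset.mpr (Or.inr ⟨k, hik, hd⟩))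
      rw [hWa, zero_mul]
    calc ∑ k ∈ (hfin i).toFinset, W i k * Wpow W (a+b) k j
        = ∑ k ∈ (hfin i).toFinset, ∑ l ∈ (ballFinite hfin (a+1) i).toFinset,
            W i k * (Wpow W a k l * Wpow W b l j) := by
          refine Finset.sum_congr rfl fun k hk => ?_
          rw [inner k hk, Finset.mul_sum]
      _ = ∑ l ∈ (ballFinite hfin (a+1) i).toFinset,
            (∑ k ∈ (hfin i).toFinset, W i k * Wpow W a k l) * Wpow W b l j := by
          rw [Finset.sum_comm]
          simp [Finset.sum_mul, mul_assoc]
      _ = ∑ l ∈ (ballFinite hfin (a+1) i).toFinset, Wpow W (a+1) i l * Wpow W b l j := by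
          refine Finset.sum_congr rfl fun l _ => ?_
          rw [Wpow_succ_sum hfin]
      _ = ∑' l, Wpow W (a+1) i l * Wpow W b l j := by
          refine (tsum_eq_sum fun l hl => ?_).symm
          have h0 : Wpow W (a+1) i l = 0 := by
            by_contra hne
            exact hl ((ballFinite hfin (a+1) i).mem_toFinset.mpr (Wpow_ne_zero_imp (a+1) i l hne))
          rw [h0, zero_mul]

variable {G : Type*} {W : G → G → ℝ}

private lemma summable_term {f : ℕ → ℝ} (hf : Summable fun h => |f h|)
    (hWle : ∀ (h : ℕ) (k l : G), |Wpow W h k l| ≤ 1) (i j : G) :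
    Summable (fun h => f h * Wpow W h i j) := by
  refine Summable.of_abs (Summable.of_nonneg_of_le (fun h => abs_nonneg _) (fun h => ?_) hf)
  rw [abs_mul]
  calc |f h| * |Wpow W h i j| ≤ |f h| * 1 := mul_le_mul_of_nonneg_left (hWle h i j) (abs_nonneg _)
    _ = |f h| := mul_one _

private lemma summable_pair {f g : ℕ → ℝ} (hf : Summable fun h => |f h|)
    (hg : Summable fun h => |g h|) (F : ℕ × ℕ → ℝ)
    (hFle : ∀ p, |F p| ≤ |f p.1| * |g p.2|) : Summable F := by
  have h1 : Summable fun p : ℕ × ℕ => |f p.1| * |g p.2| := by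
    exact Summable.mul_of_nonneg (f := fun h => |f h|) (g := fun h => |g h|) hf hg
      (fun h => abs_nonneg _) (fun h => abs_nonneg _)
  have h2 : Summable fun p : ℕ × ℕ => |F p| :=
    Summable.of_nonneg_of_le (fun p => abs_nonneg _) hFle h1
  exact h2.of_abs

private lemma bound4 {f g : ℕ → ℝ} (hWle : ∀ (h : ℕ) (k l : G), |Wpow W h k l| ≤ 1)
    (i j : G) (p : ℕ × ℕ) :
    |(f p.1 * Wpow W p.1 i j) * (g p.2 * Wpow W p.2 j i)| ≤ |f p.1| * |g p.2| := by
  rw [abs_mul, abs_mul, abs_mul]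
  calc |f p.1| * |Wpow W p.1 i j| * (|g p.2| * |Wpow W p.2 j i|)
      ≤ |f p.1| * 1 * (|g p.2| * 1) := by
        gcongr
        · exact hWle _ _ _
        · exact hWle _ _ _
    _ = |f p.1| * |g p.2| := by ring

private lemma Kmat_ne_zero {f : ℕ → ℝ} {i j : G} (h : Kmat W f i j ≠ 0) :
    ∃ n, f n ≠ 0 ∧ Wpow W n i j ≠ 0 := by
  obtain ⟨n, hn⟩ := exists_ne_zero_of_tsum_ne_zero h
  exact ⟨n, fun h0 => hn (by rw [h0, zero_mul]), fun h0 => hn (by rw [h0, mul_zero])⟩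

private lemma v_support {P : ℕ} {f g : ℕ → ℝ} (hsym : ∀ i j, W i j = W j i)
    (hfin : ∀ i, ({j | W i j ≠ 0} : Set G).Finite)
    (hpoly : (∀ h, P < h → f h = 0) ∨ (∀ h, P < h → g h = 0)) {i j : G}
    (hv : Kmat W f i j * Kmat W g j i ≠ 0) : ∃ h ≤ P, Wpow W h i j ≠ 0 := by
  rcases hpoly with hfp | hgp
  · have h1 : Kmat W f i j ≠ 0 := fun h0 => hv (by rw [h0, zero_mul])
    obtain ⟨n, hfn, hWn⟩ := Kmat_ne_zero h1
    have hn : n ≤ P := by by_contra hgt; exact hfn (hfp n (by omega))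
    exact ⟨n, hn, hWn⟩
  · have h2 : Kmat W g j i ≠ 0 := fun h0 => hv (by rw [h0, mul_zero])
    obtain ⟨n, hgn, hWn⟩ := Kmat_ne_zero h2
    have hn : n ≤ P := by by_contra hgt; exact hgn (hgp n (by omega))
    exact ⟨n, hn, by rw [Wpow_symm hsym hfin n i j]; exact hWn⟩

private lemma diag_eq {D : ℕ} (hD : 0 < D) (hsym : ∀ i j, W i j = W j i)
    (hfin : ∀ i, ({j | W i j ≠ 0} : Set G).Finite)
    (hcard : ∀ i, ({j | W i j ≠ 0} : Set G).ncard ≤ D)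
    (hbd : ∀ i j, |W i j| ≤ 1 / (D:ℝ))
    {P : ℕ} {f g : ℕ → ℝ} (hf : Summable fun h => |f h|) (hg : Summable fun h => |g h|)
    (hpoly : (∀ h, P < h → f h = 0) ∨ (∀ h, P < h → g h = 0)) (i : G) :
    Kmat W (cauchy f g) i i
      = ∑ j ∈ (ballFinite hfin P i).toFinset, Kmat W f i j * Kmat W g j i := by
  have hWle : ∀ (h:ℕ) (k l : G), |Wpow W h k l| ≤ 1 := Wpow_abs_le_one hD hfin hcard hbd
  set F : ℕ × ℕ → ℝ := fun p => f p.1 * g p.2 * Wpow W (p.1 + p.2) i i with hF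
  have hFsum : Summable F := summable_pair hf hg F (fun p => by
    rw [hF]
    simp only []
    rw [abs_mul, abs_mul]
    calc |f p.1| * |g p.2| * |Wpow W (p.1+p.2) i i| ≤ |f p.1| * |g p.2| * 1 := by
          gcongr; exact hWle _ _ _
      _ = |f p.1| * |g p.2| := mul_one _)
  have h1 : Kmat W (cauchy f g) i i = ∑' n, ∑ kl ∈ Finset.HasAntidiagonal.antidiagonal n, F kl := by
    rw [Kmat]
    refine tsum_congr fun n => ?_
    rw [Finset.Nat.sum_antidiagonal_eq_sum_range_succ_mk, cauchy, Finset.sum_mul]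
    refine Finset.sum_congr rfl fun k hk => ?_
    have hk' : k ≤ n := Nat.lt_succ_iff.mp (Finset.mem_range.mp hk)
    show f k * g (n - k) * Wpow W n i i = f k * g (n - k) * Wpow W (k + (n - k)) i i
    rw [Nat.add_sub_cancel' hk']
  have h2 : ∑' p : ℕ × ℕ, F p = ∑' n, ∑ kl ∈ Finset.HasAntidiagonal.antidiagonal n, F kl :=
    tsum_prod_antidiagonal hFsum
  have h3 : ∀ p : ℕ × ℕ, F p = ∑ j ∈ (ballFinite hfin P i).toFinset,
      (f p.1 * Wpow W p.1 i j) * (g p.2 * Wpow W p.2 j i) := by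
    intro p
    have hrw : ∑ j ∈ (ballFinite hfin P i).toFinset,
        (f p.1 * Wpow W p.1 i j) * (g p.2 * Wpow W p.2 j i)
        = f p.1 * g p.2 * ∑ j ∈ (ballFinite hfin P i).toFinset,
            Wpow W p.1 i j * Wpow W p.2 j i := by
      rw [Finset.mul_sum]
      exact Finset.sum_congr rfl fun j _ => by ring
    rw [hrw]
    by_cases hf0 : f p.1 = 0
    · rw [hF]; simp [hf0]
    by_cases hg0 : g p.2 = 0
    · rw [hF]; simp [hg0]
    have hsum : ∑ j ∈ (ballFinite hfin P i).toFinset, Wpow W p.1 i j * Wpow W p.2 j i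
        = Wpow W (p.1 + p.2) i i := by
      rw [Wpow_add hfin p.1 p.2 i i]
      refine (tsum_eq_sum fun j hj => ?_).symm
      rcases hpoly with hfp | hgp
      · have hP1 : p.1 ≤ P := by by_contra hgt; exact hf0 (hfp p.1 (by omega))
        have h0 : Wpow W p.1 i j = 0 := by
          by_contra hne
          exact hj (((ballFinite hfin P i).mem_toFinset).mpr
            (distLe_mono hP1 (Wpow_ne_zero_imp p.1 i j hne)))
        rw [h0, zero_mul]
      · have hP2 : p.2 ≤ P := by by_contra hgt; exact hg0 (hgp p.2 (by omega))
        have h0 : Wpow W p.2 j i = 0 := by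
          by_contra hne
          exact hj (((ballFinite hfin P i).mem_toFinset).mpr
            (distLe_mono hP2 (distLe_symm hsym (Wpow_ne_zero_imp p.2 j i hne))))
        rw [h0, mul_zero]
    rw [hsum, hF]
  have h4 : ∑' p : ℕ × ℕ, F p = ∑ j ∈ (ballFinite hfin P i).toFinset,
      ∑' p : ℕ × ℕ, (f p.1 * Wpow W p.1 i j) * (g p.2 * Wpow W p.2 j i) := by
    rw [tsum_congr h3]
    exact Summable.tsum_finsetSum fun j _ => summable_pair hf hg _ (bound4 hWle i j)
  have h5 : ∀ j : G, (∑' p : ℕ × ℕ, (f p.1 * Wpow W p.1 i j) * (g p.2 * Wpow W p.2 j i))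
      = Kmat W f i j * Kmat W g j i := by
    intro j
    rw [Kmat, Kmat]
    exact (Summable.tsum_mul_tsum (summable_term hf hWle i j) (summable_term hg hWle j i)
      (summable_pair hf hg _ (bound4 hWle i j))).symm
  rw [h1, ← h2, h4]
  exact Finset.sum_congr rfl fun j _ => h5 j


set_option maxHeartbeats 1000000

private def BvalAux (W : G → G → ℝ) (Gn : Finset G) (p : G × G) : ℝ :=
  (({q : G × G | q.1 ∈ Gn ∧ muEquiv W q.1 q.2 p.1 p.2} : Set (G × G)).ncard : ℝ) /
  (({q : G × G | q.1 ∈ Gn ∧ q.2 ∈ Gn ∧ muEquiv W q.1 q.2 p.1 p.2} : Set (G × G)).ncard : ℝ)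

end Stmt8Aux

/-- Exact correction lemma. If `f` or `g` is a polynomial of degree
at most `P`, then under Assumption 4, `Tr(K_n(f)·Q_n(g)) = Tr(K_n(f·g))`. -/
theorem stmt8 {G : Type*} [Countable G] (W : G → G → ℝ) (D : ℕ) (hD : 0 < D)
    (hker : KernelHyp W D)
    (P : ℕ) (hP : 0 < P) (Gn : Finset G)
    (hA4 : Assumption4 W P Gn)
    (f g : ℕ → ℝ)
    (hf : Summable (fun h => |f h|)) (hg : Summable (fun h => |g h|))
    (hpoly : (∀ h, P < h → f h = 0) ∨ (∀ h, P < h → g h = 0)) :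
    Matrix.trace (Kn W f Gn * Qn W P g Gn) = Matrix.trace (Kn W (cauchy f g) Gn) := by
  classical
  obtain ⟨hsym, hfin, hcard, hbd⟩ := hker
  have hWle : ∀ (h : ℕ) (k l : G), |Wpow W h k l| ≤ 1 := Wpow_abs_le_one hD hfin hcard hbd
  set v : G → G → ℝ := fun k l => Kmat W f k l * Kmat W g l k with hvdef
  have hvK : ∀ k l : G, v k l = Kmat W f k l * Kmat W g l k := fun _ _ => rfl
  have hKfs : ∀ k l : G, Kmat W f k l = Kmat W f l k :=
    fun k l => tsum_congr fun n => by rw [Wpow_symm hsym hfin n k l]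
  have hKgs : ∀ k l : G, Kmat W g k l = Kmat W g l k :=
    fun k l => tsum_congr fun n => by rw [Wpow_symm hsym hfin n k l]
  have hgood : ∀ {k l : G}, v k l ≠ 0 → ∃ h ≤ P, Wpow W h k l ≠ 0 :=
    fun {k l} hv => v_support hsym hfin hpoly hv
  have hvinv : ∀ q p : G × G, muEquiv W q.1 q.2 p.1 p.2 → v q.1 q.2 = v p.1 p.2 := by
    intro q p hμ
    have h1 : Kmat W f q.1 q.2 = Kmat W f p.1 p.2 := tsum_congr fun n => by rw [hμ n]
    have h2 : Kmat W g q.2 q.1 = Kmat W g p.2 p.1 := by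
      rw [hKgs q.2 q.1, hKgs p.2 p.1]
      exact tsum_congr fun n => by rw [hμ n]
    rw [hvK, hvK, h1, h2]
  set AR : Finset (G × G) :=
    Gn.biUnion (fun k => ((ballFinite hfin P k).toFinset).image (fun l => (k, l))) with hARdef
  have memAR : ∀ p : G × G, p ∈ AR ↔ p.1 ∈ Gn ∧ distLe W P p.1 p.2 := by
    intro p
    rw [hARdef]
    simp only [Finset.mem_biUnion, Finset.mem_image, Set.Finite.mem_toFinset, Set.mem_setOf_eq]
    constructor
    · rintro ⟨k, hk, l, hl, rfl⟩; exact ⟨hk, hl⟩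
    · rintro ⟨h1, h2⟩; exact ⟨p.1, h1, p.2, h2, Prod.mk.eta⟩
  set AL : Finset (G × G) := (Gn ×ˢ Gn).filter (fun p => distLe W P p.1 p.2) with hALdef
  have memAL : ∀ p : G × G, p ∈ AL ↔ (p.1 ∈ Gn ∧ p.2 ∈ Gn) ∧ distLe W P p.1 p.2 := by
    intro p; rw [hALdef, Finset.mem_filter, Finset.mem_product]
  -- class card identifications
  have hclassN : ∀ p : G × G, (∃ h ≤ P, Wpow W h p.1 p.2 ≠ 0) →
      (({q : G × G | q.1 ∈ Gn ∧ muEquiv W q.1 q.2 p.1 p.2} : Set (G × G)).ncard)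
        = (AR.filter (fun r => muEquiv W r.1 r.2 p.1 p.2)).card := by
    rintro p ⟨h, hhP, hW⟩
    have hset : ({q : G × G | q.1 ∈ Gn ∧ muEquiv W q.1 q.2 p.1 p.2} : Set (G × G))
        = ↑(AR.filter (fun r => muEquiv W r.1 r.2 p.1 p.2)) := by
      ext q
      simp only [Set.mem_setOf_eq, Finset.coe_filter, Finset.mem_coe, Finset.mem_filter, memAR q]
      constructor
      · rintro ⟨h1, h2⟩
        refine ⟨⟨h1, ?_⟩, h2⟩
        have hW' : Wpow W h q.1 q.2 ≠ 0 := by rw [h2 h]; exact hW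
        exact distLe_mono hhP (Wpow_ne_zero_imp h q.1 q.2 hW')
      · rintro ⟨⟨h1, _⟩, h2⟩; exact ⟨h1, h2⟩
    rw [hset, Set.ncard_coe_finset]
  have hclassM : ∀ p : G × G, (∃ h ≤ P, Wpow W h p.1 p.2 ≠ 0) →
      (({q : G × G | q.1 ∈ Gn ∧ q.2 ∈ Gn ∧ muEquiv W q.1 q.2 p.1 p.2} : Set (G × G)).ncard)
        = (AL.filter (fun r => muEquiv W r.1 r.2 p.1 p.2)).card := by
    rintro p ⟨h, hhP, hW⟩
    have hset : ({q : G × G | q.1 ∈ Gn ∧ q.2 ∈ Gn ∧ muEquiv W q.1 q.2 p.1 p.2} : Set (G × G))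
        = ↑(AL.filter (fun r => muEquiv W r.1 r.2 p.1 p.2)) := by
      ext q
      simp only [Set.mem_setOf_eq, Finset.coe_filter, Finset.mem_coe, Finset.mem_filter, memAL q]
      constructor
      · rintro ⟨h1, h2, h3⟩
        refine ⟨⟨⟨h1, h2⟩, ?_⟩, h3⟩
        have hW' : Wpow W h q.1 q.2 ≠ 0 := by rw [h3 h]; exact hW
        exact distLe_mono hhP (Wpow_ne_zero_imp h q.1 q.2 hW')
      · rintro ⟨⟨⟨h1, h2⟩, _⟩, h3⟩; exact ⟨h1, h2, h3⟩
    rw [hset, Set.ncard_coe_finset]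
  have hMpos : ∀ q : G × G, distLe W P q.1 q.2 → (∃ h ≤ P, Wpow W h q.1 q.2 ≠ 0) →
      0 < (AL.filter (fun r => muEquiv W r.1 r.2 q.1 q.2)).card := by
    rintro q hdq ⟨h, hhP, hW⟩
    obtain ⟨k, hk, l, hl, hμ⟩ := hA4.2 q.1 q.2 hdq
    refine Finset.card_pos.mpr ⟨(k, l), ?_⟩
    rw [Finset.mem_filter, memAL]
    have hW' : Wpow W h k l ≠ 0 := by rw [hμ h]; exact hW
    exact ⟨⟨⟨hk, hl⟩, distLe_mono hhP (Wpow_ne_zero_imp h k l hW')⟩, hμ⟩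
  have hfilterswap : ∀ (A : Finset (G × G)) (p : G × G),
      A.filter (fun q => muEquiv W p.1 p.2 q.1 q.2)
        = A.filter (fun q => muEquiv W q.1 q.2 p.1 p.2) := by
    intro A p
    refine Finset.filter_congr fun q _ => ?_
    exact ⟨fun h n => (h n).symm, fun h n => (h n).symm⟩
  have hfiltereq : ∀ (A : Finset (G × G)) (q p : G × G), muEquiv W q.1 q.2 p.1 p.2 →
      A.filter (fun r => muEquiv W r.1 r.2 q.1 q.2)
        = A.filter (fun r => muEquiv W r.1 r.2 p.1 p.2) := by
    intro A q p hμ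
    refine Finset.filter_congr fun r _ => ?_
    constructor
    · intro h n; rw [h n, hμ n]
    · intro h n; rw [h n, ← hμ n]
  -- RHS
  have hRHS : Matrix.trace (Kn W (cauchy f g) Gn) = ∑ q ∈ AR, v q.1 q.2 := by
    have htr : Matrix.trace (Kn W (cauchy f g) Gn) = ∑ i ∈ Gn, Kmat W (cauchy f g) i i := by
      rw [Matrix.trace, ← Finset.sum_coe_sort Gn (fun i => Kmat W (cauchy f g) i i)]
      rfl
    rw [htr]
    have hdiag : ∀ i ∈ Gn, Kmat W (cauchy f g) i i
        = ∑ l ∈ (ballFinite hfin P i).toFinset, v i l :=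
      fun i _ => diag_eq hD hsym hfin hcard hbd hf hg hpoly i
    rw [Finset.sum_congr rfl hdiag, hARdef, Finset.sum_biUnion]
    · refine Finset.sum_congr rfl fun k _ => ?_
      refine (Finset.sum_image (g := fun l => (k, l)) (f := fun q : G × G => v q.1 q.2)
        ?_).symm
      intro a _ b _ hab
      simpa using hab
    · intro a _ b _ hab
      simp only [Function.onFun]
      rw [Finset.disjoint_left]
      rintro p hp hp'
      simp only [Finset.mem_coe, Finset.mem_image, Set.Finite.mem_toFinset] at hp hp'
      obtain ⟨x, _, rfl⟩ := hp
      obtain ⟨y, _, hy⟩ := hp'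
      exact hab (congrArg Prod.fst hy).symm
  -- LHS
  have hLHS : Matrix.trace (Kn W f Gn * Qn W P g Gn)
      = ∑ p ∈ AL, BvalAux W Gn p * v p.1 p.2 := by
    have htr : Matrix.trace (Kn W f Gn * Qn W P g Gn)
        = ∑ k ∈ Gn, ∑ l ∈ Gn, Kmat W f k l *
            ((if distLe W P l k then BvalAux W Gn (l, k) else 1) * Kmat W g l k) := by
      rw [Matrix.trace]
      simp only [Matrix.diag, Matrix.mul_apply]
      rw [← Finset.sum_coe_sort Gn (fun k => ∑ l ∈ Gn, Kmat W f k l *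
            ((if distLe W P l k then BvalAux W Gn (l, k) else 1) * Kmat W g l k))]
      refine Finset.sum_congr rfl fun i _ => ?_
      rw [← Finset.sum_coe_sort Gn (fun l => Kmat W f (↑i) l *
            ((if distLe W P l ↑i then BvalAux W Gn (l, ↑i) else 1) * Kmat W g l ↑i))]
      rfl
    rw [htr]
    have hstep : ∀ k ∈ Gn, ∀ l ∈ Gn, Kmat W f k l *
        ((if distLe W P l k then BvalAux W Gn (l, k) else 1) * Kmat W g l k)
          = (if distLe W P l k then BvalAux W Gn (l, k) else 1) * v l k := by
      intro k _ l _
      rw [hvK, hKfs k l, hKgs l k]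
      ring
    calc ∑ k ∈ Gn, ∑ l ∈ Gn, Kmat W f k l *
            ((if distLe W P l k then BvalAux W Gn (l, k) else 1) * Kmat W g l k)
        = ∑ k ∈ Gn, ∑ l ∈ Gn,
            (if distLe W P l k then BvalAux W Gn (l, k) else 1) * v l k :=
          Finset.sum_congr rfl fun k hk => Finset.sum_congr rfl fun l hl => hstep k hk l hl
      _ = ∑ l ∈ Gn, ∑ k ∈ Gn,
            (if distLe W P l k then BvalAux W Gn (l, k) else 1) * v l k := Finset.sum_comm
      _ = ∑ p ∈ Gn ×ˢ Gn, (if distLe W P p.1 p.2 then BvalAux W Gn p else 1) * v p.1 p.2 := by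
          rw [Finset.sum_product Gn Gn
            (fun p => (if distLe W P p.1 p.2 then BvalAux W Gn p else 1) * v p.1 p.2)]
      _ = ∑ p ∈ AL, BvalAux W Gn p * v p.1 p.2 := by
          rw [hALdef]
          rw [← Finset.sum_filter_add_sum_filter_not (Gn ×ˢ Gn)
            (fun p => distLe W P p.1 p.2)
            (fun p => (if distLe W P p.1 p.2 then BvalAux W Gn p else 1) * v p.1 p.2)]
          have hz : ∑ p ∈ (Gn ×ˢ Gn).filter (fun p => ¬ distLe W P p.1 p.2),
              (if distLe W P p.1 p.2 then BvalAux W Gn p else 1) * v p.1 p.2 = 0 := by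
            refine Finset.sum_eq_zero fun p hp => ?_
            rw [Finset.mem_filter] at hp
            have hv0 : v p.1 p.2 = 0 := by
              by_contra hne
              obtain ⟨h, hhP, hW⟩ := hgood hne
              exact hp.2 (distLe_mono hhP (Wpow_ne_zero_imp h p.1 p.2 hW))
            rw [hv0, mul_zero]
          rw [hz, add_zero]
          refine Finset.sum_congr rfl fun p hp => ?_
          rw [Finset.mem_filter] at hp
          rw [if_pos hp.2]
  -- counting
  have hcount : ∑ q ∈ AR, v q.1 q.2 = ∑ p ∈ AL, BvalAux W Gn p * v p.1 p.2 := by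
    have key : ∀ q ∈ AR, v q.1 q.2 = ∑ p ∈ AL, (if muEquiv W p.1 p.2 q.1 q.2 then
        v q.1 q.2 / ((AL.filter (fun r => muEquiv W r.1 r.2 q.1 q.2)).card : ℝ) else 0) := by
      intro q hq
      rw [← Finset.sum_filter, Finset.sum_const, nsmul_eq_mul]
      by_cases hv0 : v q.1 q.2 = 0
      · rw [hv0]; simp
      · have hgq := hgood hv0
        have hpos := hMpos q ((memAR q).mp hq).2 hgq
        have hne : ((AL.filter (fun r => muEquiv W r.1 r.2 q.1 q.2)).card : ℝ) ≠ 0 := by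
          exact_mod_cast hpos.ne'
        field_simp
    rw [Finset.sum_congr rfl key, Finset.sum_comm]
    refine Finset.sum_congr rfl fun p hp => ?_
    rw [← Finset.sum_filter]
    have hterm : ∀ q ∈ AR.filter (fun q => muEquiv W p.1 p.2 q.1 q.2),
        v q.1 q.2 / ((AL.filter (fun r => muEquiv W r.1 r.2 q.1 q.2)).card : ℝ)
          = v p.1 p.2 / ((AL.filter (fun r => muEquiv W r.1 r.2 p.1 p.2)).card : ℝ) := by
      intro q hq
      rw [Finset.mem_filter] at hq
      have hμ : muEquiv W q.1 q.2 p.1 p.2 := fun n => (hq.2 n).symm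
      rw [hvinv q p hμ, hfiltereq AL q p hμ]
    rw [Finset.sum_congr rfl hterm, Finset.sum_const, nsmul_eq_mul, hfilterswap AR p]
    by_cases hv0 : v p.1 p.2 = 0
    · rw [hv0]; simp
    · have hgp := hgood hv0
      have hN := hclassN p hgp
      have hM := hclassM p hgp
      show ((AR.filter (fun r => muEquiv W r.1 r.2 p.1 p.2)).card : ℝ) * _
        = BvalAux W Gn p * v p.1 p.2
      rw [BvalAux, hN, hM]
      ring
  rw [hLHS, hRHS, hcount]


end
end

section
/- Under Assumption 3, for every real power series f with Σ_h |f_h| < ∞, the normalized trace converges: (1/m_n) Σ_{i∈G_n} K(f)(i,i) → ∫_{[−1,1]} f(λ) dμ(λ) as n → ∞, where f(λ) = Σ_h f_h λ^h. -/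
open scoped BigOperators Classical
open MeasureTheory Filter ProbabilityTheory

noncomputable section

variable {G : Type*}

/-- Under Assumption 3 (existence of the spectral measure `μ`), for
every power series `f` with `Σ_h |f_h| < ∞`,
`(1/m_n) Σ_{i∈G_n} K(f)(i,i) → ∫ f(λ) dμ(λ)`. -/
theorem stmt11 {G : Type*} [Countable G] (W : G → G → ℝ) (D : ℕ) (hD : 0 < D)
    (hker : KernelHyp W D)
    (GN : ℕ → Finset G)
    (μ : Measure ℝ) [IsProbabilityMeasure μ]
    (hsupp : μ (Set.Icc (-1 : ℝ) 1)ᶜ = 0)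
    (hA3 : ∀ k : ℕ, Tendsto
      (fun n => (1 / ((GN n).card : ℝ)) * ∑ i ∈ GN n, Wpow W k i i)
      atTop (nhds (∫ x, x ^ k ∂μ)))
    (f : ℕ → ℝ) (hf : Summable (fun h => |f h|)) :
    Tendsto (fun n => (1 / ((GN n).card : ℝ)) * ∑ i ∈ GN n, Kmat W f i i)
      atTop (nhds (∫ x, fEval f x ∂μ)) := by
  obtain ⟨hsym, hfin, hcard, hbd⟩ := hker
  have hDpos : (0 : ℝ) < D := by exact_mod_cast hD
  -- entrywise bound on Wpow
  have hWbd : ∀ h (i j : G), |Wpow W h i j| ≤ 1 := by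
    intro h
    induction h with
    | zero =>
      intro i j
      simp only [Wpow]
      split <;> norm_num
    | succ h ih =>
      intro i j
      have hsupport : ∀ k ∉ (hfin i).toFinset, W i k * Wpow W h k j = 0 := by
        intro k hk
        simp only [Set.Finite.mem_toFinset, Set.mem_setOf_eq, not_not] at hk
        simp [hk]
      have heq : Wpow W (h + 1) i j = ∑ k ∈ (hfin i).toFinset, W i k * Wpow W h k j := by
        simp only [Wpow]
        exact tsum_eq_sum hsupport
      rw [heq]
      calc |∑ k ∈ (hfin i).toFinset, W i k * Wpow W h k j|
          ≤ ∑ k ∈ (hfin i).toFinset, |W i k * Wpow W h k j| :=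
            Finset.abs_sum_le_sum_abs _ _
        _ ≤ ∑ _k ∈ (hfin i).toFinset, (1 / (D : ℝ)) := by
            apply Finset.sum_le_sum
            intro k _
            rw [abs_mul]
            calc |W i k| * |Wpow W h k j| ≤ (1 / (D : ℝ)) * 1 :=
                  mul_le_mul (hbd i k) (ih k j) (abs_nonneg _) (by positivity)
              _ = 1 / (D : ℝ) := mul_one _
        _ = ((hfin i).toFinset.card : ℝ) * (1 / (D : ℝ)) := by
            rw [Finset.sum_const, nsmul_eq_mul]
        _ ≤ (D : ℝ) * (1 / (D : ℝ)) := by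
            apply mul_le_mul_of_nonneg_right _ (by positivity)
            have h1 := hcard i
            rw [Set.ncard_eq_toFinset_card _ (hfin i)] at h1
            exact_mod_cast h1
        _ = 1 := by field_simp
  -- summability of the series defining Kmat on the diagonal
  have hsum : ∀ i : G, Summable (fun h => f h * Wpow W h i i) := by
    intro i
    apply Summable.of_norm_bounded hf
    intro h
    rw [Real.norm_eq_abs, abs_mul]
    calc |f h| * |Wpow W h i i| ≤ |f h| * 1 :=
          mul_le_mul_of_nonneg_left (hWbd h i i) (abs_nonneg _)
      _ = |f h| := mul_one _
  -- rewrite the trace as a tsum over h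
  have hLHS : ∀ n, (1 / ((GN n).card : ℝ)) * ∑ i ∈ GN n, Kmat W f i i
      = ∑' h, f h * ((1 / ((GN n).card : ℝ)) * ∑ i ∈ GN n, Wpow W h i i) := by
    intro n
    have h1 : ∑ i ∈ GN n, Kmat W f i i = ∑' h, ∑ i ∈ GN n, f h * Wpow W h i i := by
      unfold Kmat
      rw [Summable.tsum_finsetSum (fun i _ => hsum i)]
    rw [h1, ← tsum_mul_left]
    congr 1
    ext h
    rw [Finset.mul_sum, Finset.mul_sum, Finset.mul_sum]
    apply Finset.sum_congr rfl
    intro i _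
    ring
  -- a.e. bound on x
  have hae : ∀ᵐ x ∂μ, x ∈ Set.Icc (-1 : ℝ) 1 := by
    rw [MeasureTheory.ae_iff]
    exact hsupp
  -- integrability of each term
  have hint : ∀ h : ℕ, MeasureTheory.Integrable (fun x : ℝ => f h * x ^ h) μ := by
    intro h
    apply MeasureTheory.Integrable.mono' (MeasureTheory.integrable_const (|f h|))
    · exact (measurable_const.mul (measurable_id.pow_const h)).aestronglyMeasurable
    · filter_upwards [hae] with x hx
      rw [Real.norm_eq_abs, abs_mul]
      calc |f h| * |x ^ h| ≤ |f h| * 1 := by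
            apply mul_le_mul_of_nonneg_left _ (abs_nonneg _)
            rw [abs_pow]
            exact pow_le_one₀ (abs_nonneg _) (abs_le.mpr ⟨hx.1, hx.2⟩)
        _ = |f h| := mul_one _
  -- the limit integral as a tsum
  have hRHS : ∫ x, fEval f x ∂μ = ∑' h, f h * ∫ x, x ^ h ∂μ := by
    have hnorm : ∀ h : ℕ, ∫ x, ‖f h * x ^ h‖ ∂μ ≤ |f h| := by
      intro h
      calc ∫ x, ‖f h * x ^ h‖ ∂μ ≤ ∫ _x, |f h| ∂μ := by
            apply MeasureTheory.integral_mono_ae (hint h).norm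
              (MeasureTheory.integrable_const _)
            filter_upwards [hae] with x hx
            rw [Real.norm_eq_abs, abs_mul]
            calc |f h| * |x ^ h| ≤ |f h| * 1 := by
                  apply mul_le_mul_of_nonneg_left _ (abs_nonneg _)
                  rw [abs_pow]
                  exact pow_le_one₀ (abs_nonneg _) (abs_le.mpr ⟨hx.1, hx.2⟩)
              _ = |f h| := mul_one _
        _ = |f h| := by simp
    have hsumnorm : Summable (fun h : ℕ => ∫ x, ‖f h * x ^ h‖ ∂μ) := by
      apply Summable.of_nonneg_of_le
        (fun h => MeasureTheory.integral_nonneg (fun x => norm_nonneg _)) hnorm hf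
    have := MeasureTheory.integral_tsum_of_summable_integral_norm hint hsumnorm
    unfold fEval
    rw [← this]
    congr 1
    ext h
    rw [MeasureTheory.integral_const_mul]
  rw [hRHS]
  simp only [hLHS]
  -- dominated convergence for series
  apply tendsto_tsum_of_dominated_convergence hf
  · intro h
    exact (hA3 h).const_mul (f h)
  · filter_upwards with n h
    rw [Real.norm_eq_abs, abs_mul]
    have hbound : |(1 / ((GN n).card : ℝ)) * ∑ i ∈ GN n, Wpow W h i i| ≤ 1 := by
      rw [abs_mul]
      rcases eq_or_ne ((GN n).card : ℝ) 0 with h0 | h0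
      · simp [h0]
      have hpos : (0 : ℝ) < ((GN n).card : ℝ) := by
        have : (0:ℝ) ≤ ((GN n).card : ℝ) := Nat.cast_nonneg _
        exact lt_of_le_of_ne this (Ne.symm h0)
      calc |1 / ((GN n).card : ℝ)| * |∑ i ∈ GN n, Wpow W h i i|
          ≤ (1 / ((GN n).card : ℝ)) * ((GN n).card : ℝ) := by
            apply mul_le_mul
            · rw [abs_of_nonneg (by positivity)]
            · calc |∑ i ∈ GN n, Wpow W h i i| ≤ ∑ i ∈ GN n, |Wpow W h i i| :=
                    Finset.abs_sum_le_sum_abs _ _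
                _ ≤ ∑ _i ∈ GN n, (1 : ℝ) := Finset.sum_le_sum (fun i _ => hWbd h i i)
                _ = ((GN n).card : ℝ) := by simp
            · exact abs_nonneg _
            · positivity
        _ = 1 := by field_simp
    calc |f h| * |(1 / ((GN n).card : ℝ)) * ∑ i ∈ GN n, Wpow W h i i|
        ≤ |f h| * 1 := mul_le_mul_of_nonneg_left hbound (abs_nonneg _)
      _ = |f h| := mul_one _

end
end

section
/- Let θ_0 ∈ Θ and let (ℓ_n)_{n∈ℕ} be a sequence of continuous real-valued functions on Θ such that ℓ_n(θ_0) − ℓ_n(θ) converges, uniformly in θ ∈ Θ as n → ∞, to IK(θ_0, θ) := (1/2) ∫_{[−1,1]} ( −log(f_{θ_0}(λ)/f_θ(λ)) − 1 + f_{θ_0}(λ)/f_θ(λ) ) dμ(λ). If θ_n is any maximizer of ℓ_n over Θ for each n, then θ_n → θ_0 as n → ∞. -/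
open MeasureTheory Filter

noncomputable section

set_option maxHeartbeats 1000000 in
/-- convergence of maximizers to the Kullback minimizer.
If `ℓ_n(θ_0) − ℓ_n(θ)` converges uniformly on the compact interval `Θ = [a,b]` to the
asymptotic Kullback information
`IK(θ_0,θ) = (1/2)∫(−log(f_{θ_0}/f_θ) − 1 + f_{θ_0}/f_θ)dμ`, then any sequence of
maximizers `θ_n` of `ℓ_n` over `Θ` converges to `θ_0`. -/
theorem stmt12 (a b : ℝ) (hab : a < b)
    (μ : Measure ℝ) [IsProbabilityMeasure μ]
    (hsupp : μ (Set.Icc (-1 : ℝ) 1)ᶜ = 0)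
    (f : ℝ → ℝ → ℝ) (θ0 : ℝ) (hθ0 : θ0 ∈ Set.Icc a b)
    (hpos : ∀ θ ∈ Set.Icc a b, ∀ x ∈ Set.Icc (-1 : ℝ) 1, 0 < f θ x)
    (hcontx : ∀ θ ∈ Set.Icc a b, ContinuousOn (f θ) (Set.Icc (-1 : ℝ) 1))
    (hcontθ : ∀ x ∈ Set.Icc (-1 : ℝ) 1, ContinuousOn (fun θ => f θ x) (Set.Icc a b))
    (hcontsup : ∀ θ ∈ Set.Icc a b, ∀ ε > 0, ∃ δ > 0, ∀ θ' ∈ Set.Icc a b,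
      |θ' - θ| < δ → ∀ x ∈ Set.Icc (-1 : ℝ) 1, |f θ' x - f θ x| ≤ ε)
    (hident : ∀ θ ∈ Set.Icc a b, (∀ᵐ x ∂μ, f θ x = f θ0 x) → θ = θ0)
    (ℓ : ℕ → ℝ → ℝ) (hℓcont : ∀ n, ContinuousOn (ℓ n) (Set.Icc a b))
    (hconv : TendstoUniformlyOn (fun n θ => ℓ n θ0 - ℓ n θ)
      (fun θ => (1 / 2) * ∫ x, (-Real.log (f θ0 x / f θ x) - 1 + f θ0 x / f θ x) ∂μ)
      atTop (Set.Icc a b))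
    (θn : ℕ → ℝ)
    (hθn : ∀ n, θn n ∈ Set.Icc a b ∧ ∀ θ ∈ Set.Icc a b, ℓ n θ ≤ ℓ n (θn n)) :
    Tendsto θn atTop (nhds θ0) := by
  classical
  have hSne : (Set.Icc (-1:ℝ) 1).Nonempty := ⟨0, by norm_num⟩
  have hScomp : IsCompact (Set.Icc (-1:ℝ) 1) := isCompact_Icc
  have hKcomp : IsCompact (Set.Icc a b) := isCompact_Icc
  have hmem : ∀ᵐ x ∂μ, x ∈ Set.Icc (-1:ℝ) 1 := by
    rw [MeasureTheory.ae_iff]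
    have hc : {x : ℝ | ¬ x ∈ Set.Icc (-1:ℝ) 1} = (Set.Icc (-1:ℝ) 1)ᶜ := rfl
    rw [hc]
    exact hsupp
  have hres : μ.restrict (Set.Icc (-1:ℝ) 1) = μ :=
    Measure.restrict_eq_self_of_ae_mem hmem
  set g : ℝ → ℝ → ℝ :=
    fun θ x => -Real.log (f θ0 x / f θ x) - 1 + f θ0 x / f θ x with hgdef
  set IK : ℝ → ℝ := fun θ => (1/2) * ∫ x, g θ x ∂μ with hIKdef
  have hconv' : TendstoUniformlyOn (fun n θ => ℓ n θ0 - ℓ n θ) IK atTop (Set.Icc a b) := hconv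
  have hgcont : ∀ θ ∈ Set.Icc a b, ContinuousOn (g θ) (Set.Icc (-1:ℝ) 1) := by
    intro θ hθ
    have h0 := hcontx θ0 hθ0
    have h1 := hcontx θ hθ
    have hne : ∀ x ∈ Set.Icc (-1:ℝ) 1, f θ x ≠ 0 := fun x hx => (hpos θ hθ x hx).ne'
    have hdiv : ContinuousOn (fun x => f θ0 x / f θ x) (Set.Icc (-1:ℝ) 1) := h0.div h1 hne
    have hlog : ContinuousOn (fun x => Real.log (f θ0 x / f θ x)) (Set.Icc (-1:ℝ) 1) :=
      hdiv.log (fun x hx => div_ne_zero (hpos θ0 hθ0 x hx).ne' (hne x hx))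
    exact (hlog.neg.sub continuousOn_const).add hdiv
  have hgint : ∀ θ ∈ Set.Icc a b, Integrable (g θ) μ := by
    intro θ hθ
    rw [← hres]
    exact (hgcont θ hθ).integrableOn_compact hScomp
  have hgnn : ∀ θ ∈ Set.Icc a b, ∀ x ∈ Set.Icc (-1:ℝ) 1, 0 ≤ g θ x := by
    intro θ hθ x hx
    have hr : 0 < f θ0 x / f θ x := div_pos (hpos θ0 hθ0 x hx) (hpos θ hθ x hx)
    have := Real.log_le_sub_one_of_pos hr
    simp only [hgdef]
    linarith
  have hIKnn : ∀ θ ∈ Set.Icc a b, 0 ≤ IK θ := by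
    intro θ hθ
    have : 0 ≤ ∫ x, g θ x ∂μ :=
      integral_nonneg_of_ae (hmem.mono fun x hx => hgnn θ hθ x hx)
    simp only [hIKdef]
    linarith
  have hIKzero : ∀ θ ∈ Set.Icc a b, IK θ = 0 → θ = θ0 := by
    intro θ hθ h0
    have hint : ∫ x, g θ x ∂μ = 0 := by
      simp only [hIKdef] at h0
      linarith
    have hae : g θ =ᵐ[μ] 0 :=
      (integral_eq_zero_iff_of_nonneg_ae (hmem.mono fun x hx => hgnn θ hθ x hx)
        (hgint θ hθ)).mp hint
    apply hident θ hθ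
    filter_upwards [hae, hmem] with x hx0 hxS
    have hfθ : 0 < f θ x := hpos θ hθ x hxS
    have hfθ0 : 0 < f θ0 x := hpos θ0 hθ0 x hxS
    have hr : 0 < f θ0 x / f θ x := div_pos hfθ0 hfθ
    by_contra hne
    have hrne : f θ0 x / f θ x ≠ 1 := by
      intro h1
      exact hne ((div_eq_one_iff_eq hfθ.ne').mp h1).symm
    have hlt := Real.log_lt_sub_one_of_pos hr hrne
    simp only [hgdef, Pi.zero_apply] at hx0
    linarith
  -- continuity of IK on [a,b]
  have hIKcont : ContinuousOn IK (Set.Icc a b) := by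
    intro θ hθ
    rw [Metric.continuousWithinAt_iff]
    intro ε hε
    obtain ⟨xm, hxm, hxmin⟩ := hScomp.exists_isMinOn hSne (hcontx θ hθ)
    obtain ⟨xM, hxM, hxmax⟩ := hScomp.exists_isMaxOn hSne (hcontx θ0 hθ0)
    set m : ℝ := f θ xm with hm
    set M0 : ℝ := f θ0 xM with hM0
    have hmpos : 0 < m := hpos θ hθ xm hxm
    have hM0pos : 0 < M0 := hpos θ0 hθ0 xM hxM
    set C : ℝ := 2/m + 4*M0/m^2 with hC
    have hCpos : 0 < C := by positivity
    set ε' : ℝ := min (m/2) (ε/(2*C)) with hε'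
    have hε'pos : 0 < ε' := lt_min (by positivity) (by positivity)
    obtain ⟨δ, hδpos, hδ⟩ := hcontsup θ hθ ε' hε'pos
    refine ⟨δ, hδpos, fun θ' hθ' hd => ?_⟩
    rw [Real.dist_eq] at hd
    have hfb : ∀ x ∈ Set.Icc (-1:ℝ) 1, |f θ' x - f θ x| ≤ ε' := hδ θ' hθ' hd
    have hpt : ∀ x ∈ Set.Icc (-1:ℝ) 1, |g θ' x - g θ x| ≤ C * ε' := by
      intro x hx
      have hy : 0 < f θ x := hpos θ hθ x hx
      have hy' : 0 < f θ' x := hpos θ' hθ' x hx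
      have hc : 0 < f θ0 x := hpos θ0 hθ0 x hx
      have hym : m ≤ f θ x := hxmin hx
      have hcM : f θ0 x ≤ M0 := hxmax hx
      have hdy := abs_le.mp (hfb x hx)
      have hε'm : ε' ≤ m/2 := min_le_left _ _
      have hy'm : m/2 ≤ f θ' x := by linarith [hdy.1]
      have hsplit : g θ' x - g θ x =
          (Real.log (f θ' x) - Real.log (f θ x))
            + f θ0 x * (1/(f θ' x) - 1/(f θ x)) := by
        simp only [hgdef]
        rw [Real.log_div hc.ne' hy'.ne', Real.log_div hc.ne' hy.ne']
        field_simp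
        ring
      have hlog1 : Real.log (f θ' x) - Real.log (f θ x) ≤ 2*ε'/m := by
        have h := Real.log_le_sub_one_of_pos (div_pos hy' hy)
        rw [Real.log_div hy'.ne' hy.ne'] at h
        have h2 : f θ' x / f θ x - 1 = (f θ' x - f θ x)/(f θ x) := by field_simp
        have h3 : (f θ' x - f θ x)/(f θ x) ≤ 2*ε'/m := by
          rw [div_le_div_iff₀ hy hmpos]
          nlinarith [hdy.2, hε'pos.le, hym, hy]
        linarith
      have hlog2 : Real.log (f θ x) - Real.log (f θ' x) ≤ 2*ε'/m := by
        have h := Real.log_le_sub_one_of_pos (div_pos hy hy')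
        rw [Real.log_div hy.ne' hy'.ne'] at h
        have h2 : f θ x / f θ' x - 1 = (f θ x - f θ' x)/(f θ' x) := by field_simp
        have h3 : (f θ x - f θ' x)/(f θ' x) ≤ 2*ε'/m := by
          rw [div_le_div_iff₀ hy' hmpos]
          nlinarith [hdy.1, hε'pos.le, hy'm, hy']
        linarith
      have habs1 : |Real.log (f θ' x) - Real.log (f θ x)| ≤ 2*ε'/m := by
        rw [abs_le]; constructor <;> linarith
      have habs2 : |f θ0 x * (1/(f θ' x) - 1/(f θ x))| ≤ 4*M0*ε'/m^2 := by
        have heq : 1/(f θ' x) - 1/(f θ x) = (f θ x - f θ' x)/((f θ' x)*(f θ x)) := by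
          field_simp
        have hN : |f θ x - f θ' x| ≤ ε' := by rw [abs_sub_comm]; exact hfb x hx
        have hD : m^2 ≤ 2*(f θ' x * f θ x) := by nlinarith
        rw [heq, abs_mul, abs_of_pos hc, abs_div, abs_of_pos (mul_pos hy' hy),
          mul_div_assoc', div_le_div_iff₀ (mul_pos hy' hy) (by positivity : (0:ℝ) < m^2)]
        nlinarith [mul_le_mul hcM hN (abs_nonneg _) hM0pos.le, hε'pos.le,
          mul_pos hy' hy, mul_pos hM0pos hε'pos, hmpos, abs_nonneg (f θ x - f θ' x)]
      calc |g θ' x - g θ x|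
          ≤ |Real.log (f θ' x) - Real.log (f θ x)|
            + |f θ0 x * (1/(f θ' x) - 1/(f θ x))| := by
            rw [hsplit]; exact abs_add_le _ _
        _ ≤ 2*ε'/m + 4*M0*ε'/m^2 := add_le_add habs1 habs2
        _ = C * ε' := by rw [hC]; ring
    have hdint : IK θ' - IK θ = (1/2) * ∫ x, (g θ' x - g θ x) ∂μ := by
      simp only [hIKdef]
      rw [integral_sub (hgint θ' hθ') (hgint θ hθ)]
      ring
    have hb : ‖∫ x, (g θ' x - g θ x) ∂μ‖ ≤ (C*ε') * (μ Set.univ).toReal := by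
      apply norm_integral_le_of_norm_le_const
      filter_upwards [hmem] with x hx
      rw [Real.norm_eq_abs]
      exact hpt x hx
    rw [measure_univ, ENNReal.toReal_one, mul_one, Real.norm_eq_abs] at hb
    have hε'C : ε' ≤ ε/(2*C) := min_le_right _ _
    have hCε' : C * ε' ≤ ε/2 := by
      have h := mul_le_mul_of_nonneg_left hε'C hCpos.le
      have he : C * (ε/(2*C)) = ε/2 := by
        field_simp
      linarith
    have habs : |∫ x, (g θ' x - g θ x) ∂μ| ≤ ε/2 := hb.trans hCε'
    rw [Real.dist_eq, hdint, abs_mul]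
    have h12 : |(1:ℝ)/2| = 1/2 := by norm_num
    rw [h12]
    linarith [habs]
  -- main argument
  rw [Metric.tendsto_atTop]
  intro ε hε
  by_cases hne : (Set.Icc a b ∩ {θ | ε ≤ |θ - θ0|}).Nonempty
  · have hclosed : IsClosed {θ : ℝ | ε ≤ |θ - θ0|} :=
      isClosed_le continuous_const ((continuous_id.sub continuous_const).abs)
    have hcomp : IsCompact (Set.Icc a b ∩ {θ | ε ≤ |θ - θ0|}) := hKcomp.inter_right hclosed
    obtain ⟨θs, hθsmem, hθsmin⟩ :=
      hcomp.exists_isMinOn hne (hIKcont.mono Set.inter_subset_left)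
    have hθsK : θs ∈ Set.Icc a b := hθsmem.1
    have hIKs : 0 < IK θs := by
      rcases lt_or_eq_of_le (hIKnn θs hθsK) with h | h
      · exact h
      · exfalso
        have := hIKzero θs hθsK h.symm
        have h2 := hθsmem.2
        rw [this] at h2
        simp at h2
        linarith [h2]
    have hev := (Metric.tendstoUniformlyOn_iff.mp hconv') (IK θs) hIKs
    rw [eventually_atTop] at hev
    obtain ⟨N, hN⟩ := hev
    refine ⟨N, fun n hn => ?_⟩
    have h1 := hN n hn (θn n) (hθn n).1
    have h2 : ℓ n θ0 - ℓ n (θn n) ≤ 0 := by linarith [(hθn n).2 θ0 hθ0]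
    rw [Real.dist_eq] at h1
    have h3 : IK (θn n) < IK θs := by
      have := abs_lt.mp h1
      linarith
    by_contra hcon
    push_neg at hcon
    have hmem' : θn n ∈ Set.Icc a b ∩ {θ | ε ≤ |θ - θ0|} :=
      ⟨(hθn n).1, by rw [Set.mem_setOf_eq, ← Real.dist_eq]; exact hcon⟩
    exact absurd (isMinOn_iff.mp hθsmin _ hmem') (not_le.mpr h3)
  · refine ⟨0, fun n _ => ?_⟩
    by_contra h
    push_neg at h
    exact hne ⟨θn n, (hθn n).1, by rw [Set.mem_setOf_eq, ← Real.dist_eq]; exact h⟩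


end
end

section
/- Let X be a centered Gaussian random vector on ℝ^m with positive definite covariance matrix Σ, let A be a symmetric m × m real matrix, and let λ ∈ ℝ be such that the symmetric matrix I_m − 2λ·Σ^{1/2} A Σ^{1/2} is positive definite (in particular this holds for all λ ≤ 0 or for |λ| small enough). Then E[exp(λ·Xᵀ A X)] = det(I_m − 2λ·Σ^{1/2} A Σ^{1/2})^{−1/2}, where Σ^{1/2} is the positive semidefinite square root of Σ. -/
open MeasureTheory ProbabilityTheory

noncomputable section

def Matrix.PosSemidef.sqrt {n : Type*} [Fintype n] [DecidableEq n] {A : Matrix n n ℝ}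
    (hA : A.PosSemidef) : Matrix n n ℝ :=
  hA.1.eigenvectorUnitary.1 * Matrix.diagonal ((↑) ∘ (Real.sqrt ·) ∘ hA.1.eigenvalues) *
    (star hA.1.eigenvectorUnitary : Matrix n n ℝ)

lemma Matrix.PosSemidef.posSemidef_sqrt {n : Type*} [Fintype n] [DecidableEq n] {A : Matrix n n ℝ}
    (hA : A.PosSemidef) : hA.sqrt.PosSemidef := by
  have hD : (Matrix.diagonal ((↑) ∘ (Real.sqrt ·) ∘ hA.1.eigenvalues) : Matrix n n ℝ).PosSemidef :=
    Matrix.posSemidef_diagonal_iff.mpr fun i => Real.sqrt_nonneg _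
  have := hD.mul_mul_conjTranspose_same (hA.1.eigenvectorUnitary : Matrix n n ℝ)
  rw [← Matrix.star_eq_conjTranspose] at this
  exact this

lemma Matrix.PosSemidef.sqrt_mul_self {n : Type*} [Fintype n] [DecidableEq n] {A : Matrix n n ℝ}
    (hA : A.PosSemidef) : hA.sqrt * hA.sqrt = A := by
  have hsp := hA.1.spectral_theorem
  rw [Unitary.conjStarAlgAut_apply] at hsp
  conv_rhs => rw [hsp]
  unfold Matrix.PosSemidef.sqrt
  have hu : (star hA.1.eigenvectorUnitary : Matrix n n ℝ) * hA.1.eigenvectorUnitary.1 = 1 :=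
    Unitary.coe_star_mul_self _
  rw [show ∀ a b c d e f : Matrix n n ℝ, a * b * c * (d * e * f) = a * (b * (c * d) * e) * f from
    fun a b c d e f => by simp only [mul_assoc], hu, mul_one, Matrix.diagonal_mul_diagonal]
  congr 3
  funext i
  simp [Real.mul_self_sqrt (hA.eigenvalues_nonneg i)]

lemma lintegral_pi_prod : ∀ (n : ℕ) (μ : Fin n → Measure ℝ), (∀ i, SigmaFinite (μ i)) →
    ∀ (f : Fin n → ℝ → ENNReal), (∀ i, Measurable (f i)) →
    ∫⁻ z, ∏ i, f i (z i) ∂Measure.pi μ = ∏ i, ∫⁻ x, f i x ∂μ i := by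
  intro n
  induction n with
  | zero => intro μ _ f hf; simp [Measure.pi_of_empty μ]
  | succ n ih =>
    intro μ hsf f hf
    have hp := (measurePreserving_piFinSuccAbove μ 0).symm
    have hmeasF : Measurable fun z : Fin (n+1) → ℝ => ∏ i, f i (z i) :=
      Finset.measurable_prod _ fun i _ => (hf i).comp (measurable_pi_apply i)
    rw [← hp.lintegral_comp hmeasF]
    simp only [MeasurableEquiv.piFinSuccAbove_symm_apply, Fin.insertNthEquiv_apply,
      Fin.insertNth_zero, Fin.prod_univ_succ, Fin.cons_zero, Fin.cons_succ,
      Fin.zero_succAbove, cast_eq]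
    have hmeas2 : Measurable fun y : Fin n → ℝ => ∏ i, f i.succ (y i) :=
      Finset.measurable_prod _ fun i _ => (hf i.succ).comp (measurable_pi_apply i)
    rw [lintegral_prod_mul (hf 0).aemeasurable hmeas2.aemeasurable,
      ih _ (fun i => hsf _) _ (fun i => hf i.succ)]

lemma pi_gauss (m : ℕ) : (Measure.pi fun _ : Fin m => gaussianReal 0 1)
    = (volume : Measure (Fin m → ℝ)).withDensity fun z => ∏ i, gaussianPDF 0 1 (z i) := by
  refine Measure.pi_eq fun s hs => ?_
  rw [withDensity_apply _ (MeasurableSet.univ_pi hs)]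
  have hind : ∀ z : Fin m → ℝ, (Set.univ.pi s).indicator
        (fun z => ∏ i, gaussianPDF 0 1 (z i)) z = ∏ i, (s i).indicator (gaussianPDF 0 1) (z i) := by
    intro z
    by_cases h : z ∈ Set.univ.pi s
    · rw [Set.indicator_of_mem h]
      exact Finset.prod_congr rfl fun i _ => (Set.indicator_of_mem (h i (Set.mem_univ i)) _).symm
    · rw [Set.indicator_of_notMem h]
      have hex : ∃ i, z i ∉ s i := by simpa [Set.mem_pi] using h
      obtain ⟨i, hi⟩ := hex
      exact (Finset.prod_eq_zero (Finset.mem_univ i) (Set.indicator_of_notMem hi _)).symm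
  rw [← lintegral_indicator (MeasurableSet.univ_pi hs)]
  simp_rw [hind]
  rw [volume_pi, lintegral_pi_prod m _ (fun _ => inferInstance) _
    (fun i => (measurable_gaussianPDF 0 1).indicator (hs i))]
  refine Finset.prod_congr rfl fun i _ => ?_
  rw [lintegral_indicator (hs i), gaussianReal_of_var_ne_zero 0 one_ne_zero,
    withDensity_apply _ (hs i)]

lemma quad_conj {m : ℕ} (P C : Matrix (Fin m) (Fin m) ℝ) (hP : P.IsSymm) (z : Fin m → ℝ) :
    dotProduct (P.mulVec z) (C.mulVec (P.mulVec z))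
      = dotProduct z ((P * C * P).mulVec z) := by
  rw [Matrix.mulVec_mulVec,
    show P.mulVec z = Matrix.vecMul z P from by rw [← Matrix.mulVec_transpose, hP.eq],
    Matrix.dotProduct_mulVec, Matrix.vecMul_vecMul, ← Matrix.dotProduct_mulVec,
    ← mul_assoc]

lemma psd_det_nonneg {m : ℕ} {P : Matrix (Fin m) (Fin m) ℝ} (hP : P.PosSemidef) :
    0 ≤ P.det := by
  rw [hP.isHermitian.det_eq_prod_eigenvalues]
  exact Finset.prod_nonneg fun i _ => hP.eigenvalues_nonneg i

lemma herm_transpose {m : ℕ} {P : Matrix (Fin m) (Fin m) ℝ} (hP : P.IsHermitian) :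
    P.IsSymm := hP

lemma quad_continuous {m : ℕ} (C : Matrix (Fin m) (Fin m) ℝ) (c : ℝ) :
    Continuous fun v : Fin m → ℝ => Real.exp (c * dotProduct v (C.mulVec v)) := by
  refine Real.continuous_exp.comp (continuous_const.mul ?_)
  simp only [dotProduct, Matrix.mulVec]
  exact continuous_finset_sum _ fun i _ => (continuous_apply i).mul
    (continuous_finset_sum _ fun j _ => continuous_const.mul (continuous_apply j))

/-- Laplace transform of a Gaussian quadratic form.
If `X ~ N(0, Σ)` on `ℝ^m` with `Σ` positive definite, `A` is symmetric and
`I − 2λ Σ^{1/2} A Σ^{1/2}` is positive definite, then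
`E[exp(λ XᵀAX)] = det(I − 2λ Σ^{1/2} A Σ^{1/2})^{−1/2}`. -/
theorem stmt14 (m : ℕ) (S : Matrix (Fin m) (Fin m) ℝ) (hS : S.PosDef)
    {Ω : Type*} [MeasureSpace Ω] [IsProbabilityMeasure (ℙ : Measure Ω)]
    (X : Ω → Fin m → ℝ) (hXmeas : Measurable X)
    (hX : Measure.map X ℙ
      = Measure.map (fun z => (hS.posSemidef.sqrt).mulVec z)
          (Measure.pi fun _ : Fin m => gaussianReal 0 1))
    (A : Matrix (Fin m) (Fin m) ℝ) (hA : A.IsSymm) (l : ℝ)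
    (hpos : (1 - (2 * l) • (hS.posSemidef.sqrt * A * hS.posSemidef.sqrt)).PosDef) :
    ∫ ω, Real.exp (l * dotProduct (X ω) (A.mulVec (X ω))) ∂ℙ
      = ((1 - (2 * l) • (hS.posSemidef.sqrt * A * hS.posSemidef.sqrt)).det)
          ^ (-(1 : ℝ) / 2) := by
  set Q := hS.posSemidef.sqrt with hQdef
  set B := Q * A * Q with hBdef
  set M := 1 - (2 * l) • B with hMdef
  have hQsymm : Q.IsSymm := hS.posSemidef.posSemidef_sqrt.isHermitian
  have hdM : 0 < M.det := hpos.det_pos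
  -- Step 1: push through X and the linear map
  have hFc := quad_continuous A l
  have hQcont : Continuous fun z : Fin m → ℝ => Q.mulVec z := by
    have := LinearMap.continuous_on_pi (Matrix.mulVecLin Q)
    simpa [Matrix.coe_mulVecLin] using this
  rw [← integral_map hXmeas.aemeasurable hFc.aestronglyMeasurable, hX,
    integral_map hQcont.measurable.aemeasurable hFc.aestronglyMeasurable]
  simp_rw [quad_conj Q A hQsymm]
  -- Step 2: density of the pi Gaussian
  rw [pi_gauss m]
  set p : ℝ → NNReal := fun x => Real.toNNReal (gaussianPDFReal 0 1 x) with hpdef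
  have hdens : (fun z : Fin m → ℝ => ∏ i, gaussianPDF 0 1 (z i))
      = fun z => ((∏ i, p (z i) : NNReal) : ENNReal) := by
    funext z
    rw [ENNReal.coe_finset_prod]
    exact Finset.prod_congr rfl fun i _ => rfl
  have hpmeas : Measurable fun z : Fin m → ℝ => ∏ i, p (z i) :=
    Finset.measurable_prod _ fun i _ =>
      ((measurable_gaussianPDFReal 0 1).real_toNNReal).comp (measurable_pi_apply i)
  rw [hdens, integral_withDensity_eq_integral_smul hpmeas]
  -- Step 3: rewrite the integrand
  have hsm : ∀ z : Fin m → ℝ, (∏ i, p (z i)) • Real.exp (l * dotProduct z (B.mulVec z))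
      = (Real.sqrt (2 * Real.pi))⁻¹ ^ m
        * Real.exp (-(1/2) * dotProduct z (M.mulVec z)) := by
    intro z
    have hMz : dotProduct z (M.mulVec z)
        = dotProduct z z - (2 * l) * dotProduct z (B.mulVec z) := by
      rw [hMdef]
      simp [Matrix.sub_mulVec, Matrix.smul_mulVec, Matrix.one_mulVec,
        dotProduct_sub, dotProduct_smul, smul_eq_mul]
    have hcoe : ∀ x : ℝ, ((p x : ℝ)) = (Real.sqrt (2 * Real.pi))⁻¹ * Real.exp (-(1/2) * x ^ 2) := by
      intro x
      rw [hpdef]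
      rw [Real.coe_toNNReal _ (gaussianPDFReal_nonneg 0 1 x)]
      simp only [gaussianPDFReal, NNReal.coe_one, mul_one, sub_zero]
      congr 2
      ring
    rw [NNReal.smul_def, NNReal.coe_prod]
    simp_rw [hcoe]
    rw [Finset.prod_mul_distrib, Finset.prod_const, ← Real.exp_sum, Finset.card_univ,
      Fintype.card_fin, smul_eq_mul, mul_assoc, ← Real.exp_add]
    congr 2
    have hdp : dotProduct z z = ∑ i, z i ^ 2 := by
      simp [dotProduct, sq]
    rw [hMz, hdp, ← Finset.mul_sum]
    ring
  simp_rw [← hBdef, hsm]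
  rw [MeasureTheory.integral_const_mul]
  -- Step 4: evaluate the Gaussian integral by substitution
  set N := hpos.posSemidef.sqrt with hNdef
  have hNN : N * N = M := hpos.posSemidef.sqrt_mul_self
  have hNsymm : N.IsSymm := hpos.posSemidef.posSemidef_sqrt.isHermitian
  have hdN0 : 0 ≤ N.det := psd_det_nonneg hpos.posSemidef.posSemidef_sqrt
  have hNM : N.det * N.det = M.det := by rw [← Matrix.det_mul, hNN]
  have hdetNe : N.det ≠ 0 := by
    intro h0
    rw [h0, zero_mul] at hNM
    exact hdM.ne' hNM.symm
  have hdN : 0 < N.det := lt_of_le_of_ne hdN0 (Ne.symm hdetNe)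
  have hKd : (N⁻¹).det = N.det⁻¹ := by
    rw [Matrix.det_nonsing_inv, Ring.inverse_eq_inv]
  have hKne : (N⁻¹).det ≠ 0 := by rw [hKd]; exact inv_ne_zero hdetNe
  have hKsymm : (N⁻¹).IsSymm := by
    rw [Matrix.IsSymm, Matrix.transpose_nonsing_inv, hNsymm.eq]
  have hKMK : N⁻¹ * M * N⁻¹ = 1 := by
    rw [← hNN, mul_assoc, mul_assoc, Matrix.mul_nonsing_inv _ (isUnit_iff_ne_zero.mpr hdetNe), mul_one,
      Matrix.nonsing_inv_mul _ (isUnit_iff_ne_zero.mpr hdetNe)]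
  have hGc := quad_continuous M (-(1/2))
  have hKcont : Continuous (⇑(Matrix.toLin' (N⁻¹)) : (Fin m → ℝ) → Fin m → ℝ) :=
    LinearMap.continuous_on_pi _
  have hmap := Real.map_matrix_volume_pi_eq_smul_volume_pi (M := N⁻¹) hKne
  have hsub := integral_map (μ := (volume : Measure (Fin m → ℝ)))
    hKcont.measurable.aemeasurable hGc.aestronglyMeasurable
  rw [hmap, integral_smul_measure] at hsub
  simp only [Matrix.toLin'_apply] at hsub
  have hquadK : ∀ z : Fin m → ℝ,
      Real.exp (-(1/2) * dotProduct ((N⁻¹).mulVec z) (M.mulVec ((N⁻¹).mulVec z)))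
        = Real.exp (-(1/2) * dotProduct z z) := by
    intro z
    rw [quad_conj _ _ hKsymm, hKMK, Matrix.one_mulVec]
  simp_rw [hquadK] at hsub
  have hstd : ∫ z : Fin m → ℝ, Real.exp (-(1/2) * dotProduct z z)
      = Real.sqrt (2 * Real.pi) ^ m := by
    have hzz : ∀ z : Fin m → ℝ, Real.exp (-(1/2) * dotProduct z z)
        = ∏ i, Real.exp (-(1/2) * (z i) ^ 2) := by
      intro z
      rw [← Real.exp_sum]
      congr 1
      rw [show dotProduct z z = ∑ i, z i * z i from rfl, Finset.mul_sum]
      exact Finset.sum_congr rfl fun i _ => by ring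
    simp_rw [hzz]
    rw [integral_fintype_prod_volume_eq_pow (ι := Fin m) (fun x : ℝ => Real.exp (-(1/2) * x ^ 2)),
      Fintype.card_fin]
    congr 1
    have := integral_gaussian (1/2)
    rw [show Real.pi / (1/2) = 2 * Real.pi by ring] at this
    exact this
  rw [hstd] at hsub
  -- hsub : √(2π)^m = toReal (ofReal |det (N⁻¹)⁻¹|) • ∫ exp(-(1/2) z M z)
  have habs : |(N⁻¹).det⁻¹| = N.det := by
    rw [hKd, inv_inv, abs_of_pos hdN]
  rw [habs, ENNReal.toReal_ofReal hdN0, smul_eq_mul] at hsub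
  have hs2 : (0:ℝ) < Real.sqrt (2 * Real.pi) := Real.sqrt_pos.mpr (by positivity)
  have hJ : ∫ z : Fin m → ℝ, Real.exp (-(1/2) * dotProduct z (M.mulVec z))
      = N.det⁻¹ * Real.sqrt (2 * Real.pi) ^ m := by
    rw [← hsub, inv_mul_cancel_left₀ hdetNe]
  rw [hJ]
  have hNdet : N.det = Real.sqrt M.det := by rw [← hNM, Real.sqrt_mul_self hdN0]
  rw [neg_div, Real.rpow_neg hdM.le, ← Real.sqrt_eq_rpow, hNdet,
    mul_comm (Real.sqrt M.det)⁻¹, ← mul_assoc, inv_pow,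
    inv_mul_cancel₀ (pow_ne_zero _ hs2.ne'), one_mul]

end
end
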